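/- arXiv:1612.09006 — 10 statements merged into one kernel-verified Lean document; each statement's English description precedes it below -/
import Mathlib

section
/- Every many-to-one matching market (finite sets of students and universities, university capacity L ≥ 1, strict preferences on both sides with an outside option ⊥) admits at least one stable matching. -/
/-- The set of students assigned to university `u` by the matching `m`. -/
def assignedSet {S U : Type*} (m : S → Option U) (u : U) : Set S := {s | m s = some u}

/-- `m` is a matching for capacity `L`: each university gets at most `L` students
(each student automatically gets at most one university, as `m` is a function). -/
def IsMatching {S U : Type*} (L : ℕ) (m : S → Option U) : Prop :=
  ∀ u : U, (assignedSet m u).ncard ≤ L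

/-- `(s, u)` is a blocking pair for the matching `m`: the student `s` strictly prefers
`u` to her current assignment, and `u` either is underfilled and prefers `s` to being
unmatched, or strictly prefers `s` to one of its assigned students. -/
def IsBlockingPair {S U : Type*} (L : ℕ)
    (sPref : S → Option U → Option U → Prop) (uPref : U → Option S → Option S → Prop)
    (m : S → Option U) (s : S) (u : U) : Prop :=
  sPref s (some u) (m s) ∧
    (((assignedSet m u).ncard < L ∧ uPref u (some s) none) ∨
      ∃ t : S, m t = some u ∧ uPref u (some s) (some t))

/-- `m` is a stable matching: it is a matching for capacity `L`, every matched
student strictly prefers her university to `⊥`, every university strictly prefers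
each of its assigned students to `⊥`, and there is no blocking pair. -/
def IsStableMatching {S U : Type*} (L : ℕ)
    (sPref : S → Option U → Option U → Prop) (uPref : U → Option S → Option S → Prop)
    (m : S → Option U) : Prop :=
  IsMatching L m ∧
    (∀ s u, m s = some u → sPref s (some u) none) ∧
    (∀ s u, m s = some u → uPref u (some s) none) ∧
    ∀ s u, ¬ IsBlockingPair L sPref uPref m s u

set_option linter.unusedSectionVars false
namespace StableAux
attribute [local instance] Classical.propDecidable





variable {α : Type*}

section Rank

variable (q : α → α → Prop) (L : ℕ)

/-- number of elements of `A` strictly better than `t`. -/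
noncomputable def rankIn (A : Finset α) (t : α) : ℕ := (A.filter (fun t' => q t' t)).card

/-- the top `L` elements of `A`. -/
noncomputable def keepSet (A : Finset α) : Finset α := A.filter (fun t => rankIn q A t < L)

variable {q L}
variable (hqt : ∀ a b c, q a b → q b c → q a c) (hqi : ∀ a, ¬ q a a)
    (hqtot : ∀ a b : α, a ≠ b → q a b ∨ q b a)

lemma keepSet_subset {A : Finset α} : keepSet q L A ⊆ A := Finset.filter_subset _ _

include hqi in
lemma rank_lt_card {A : Finset α} {t : α} (ht : t ∈ A) : rankIn q A t < A.card := by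
  apply Finset.card_lt_card
  rw [Finset.ssubset_iff_of_subset (Finset.filter_subset _ _)]
  exact ⟨t, ht, by simp [hqi t]⟩

include hqt hqi in
lemma rank_strict_mono {A : Finset α} {a b : α} (ha : a ∈ A) (hab : q a b) :
    rankIn q A a < rankIn q A b := by
  apply Finset.card_lt_card
  rw [Finset.ssubset_iff_of_subset]
  · exact ⟨a, Finset.mem_filter.mpr ⟨ha, hab⟩, by simp [hqi a]⟩
  · intro x hx
    simp only [Finset.mem_filter] at hx ⊢
    exact ⟨hx.1, hqt _ _ _ hx.2 hab⟩

include hqt hqi hqtot in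
lemma rank_injOn {A : Finset α} : Set.InjOn (rankIn q A) A := by
  intro a ha b hb hab
  by_contra hne
  rcases hqtot a b hne with h | h
  · exact absurd hab (Nat.ne_of_lt (rank_strict_mono hqt hqi (by exact_mod_cast ha) h))
  · exact absurd hab.symm (Nat.ne_of_lt (rank_strict_mono hqt hqi (by exact_mod_cast hb) h))

include hqt hqi hqtot in
lemma keepSet_card_le {A : Finset α} : (keepSet q L A).card ≤ L := by
  have := Finset.card_le_card_of_injOn (rankIn q A)
    (fun t ht => Finset.mem_range.mpr (Finset.mem_filter.mp ht).2)
    ((rank_injOn hqt hqi hqtot).mono (by exact_mod_cast (keepSet_subset (q := q) (L := L) (A := A))))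
  simpa [keepSet] using this

include hqi in
lemma keepSet_eq_self {A : Finset α} (h : A.card ≤ L) : keepSet q L A = A := by
  rw [keepSet, Finset.filter_eq_self]
  exact fun t ht => lt_of_lt_of_le (rank_lt_card hqi ht) h

include hqt hqi hqtot in
lemma keepSet_card_eq {A : Finset α} (h : L ≤ A.card) : (keepSet q L A).card = L := by
  have hinj := rank_injOn (A := A) hqt hqi hqtot
  have himg : A.image (rankIn q A) = Finset.range A.card := by
    apply Finset.eq_of_subset_of_card_le
    · intro n hn
      obtain ⟨t, ht, rfl⟩ := Finset.mem_image.mp hn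
      exact Finset.mem_range.mpr (rank_lt_card hqi ht)
    · rw [Finset.card_range, Finset.card_image_of_injOn hinj]
  have hkimg : (keepSet q L A).image (rankIn q A) = Finset.range L := by
    have hfi := Finset.filter_image (s := A) (f := rankIn q A) (p := (· < L))
    rw [keepSet, ← hfi, himg]
    ext n
    simp only [Finset.mem_filter, Finset.mem_range]
    omega
  have := Finset.card_image_of_injOn
    (hinj.mono (by exact_mod_cast (keepSet_subset (q := q) (L := L) (A := A))))
  rw [hkimg, Finset.card_range] at this
  exact this.symm

include hqt hqtot in
lemma keepSet_better {A B : Finset α} {s : α} (hBA : B ⊆ A) (hB : L ≤ B.card)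
    (hBs : ∀ b ∈ B, q b s) : ∀ t ∈ keepSet q L A, q t s := by
  intro t ht
  by_contra hts
  have hsub : B ⊆ A.filter (fun b => q b t) := by
    intro b hb
    refine Finset.mem_filter.mpr ⟨hBA hb, ?_⟩
    by_cases hst : t = s
    · exact hst ▸ hBs b hb
    · rcases hqtot t s hst with h | h
      · exact absurd h hts
      · exact hqt _ _ _ (hBs b hb) h
  have : L ≤ rankIn q A t := le_trans hB (Finset.card_le_card hsub)
  exact absurd (Finset.mem_filter.mp ht).2 (not_lt.mpr this)

end Rank





section PrefList

variable {β : Type*} (r : Option β → Option β → Prop)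

/-- weak order on `β` induced by a strict order on `Option β`. -/
def sle (a b : β) : Prop := r (some a) (some b) ∨ a = b

variable [hr : IsStrictTotalOrder (Option β) r]

lemma sle_trans : IsTrans β (sle r) := by
  constructor
  rintro a b c (h1 | rfl) (h2 | rfl)
  · exact Or.inl (hr.trans _ _ _ h1 h2)
  · exact Or.inl h1
  · exact Or.inl h2
  · exact Or.inr rfl

lemma sle_antisymm : IsAntisymm β (sle r) := by
  constructor
  rintro a b (h1 | rfl) (h2 | h3)
  · exact absurd (hr.trans _ _ _ h1 h2) (hr.irrefl _)
  · exact h3.symm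
  · rfl
  · rfl

lemma sle_total : IsTotal β (sle r) := by
  constructor
  intro a b
  rcases trichotomous (r := r) (some a) (some b) with h | h | h
  · exact Or.inl (Or.inl h)
  · exact Or.inl (Or.inr (Option.some_injective _ h))
  · exact Or.inr (Or.inl h)

/-- the list of acceptable options for a student, best first. -/
noncomputable def prefList [Fintype β] : List β :=
  letI := sle_trans r; letI := sle_antisymm r; letI := sle_total r
  Finset.sort (Finset.univ.filter (fun u => r (some u) none)) (sle r)

lemma mem_prefList [Fintype β] {u : β} : u ∈ prefList r ↔ r (some u) none := by
  letI := sle_trans r; letI := sle_antisymm r; letI := sle_total r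
  rw [prefList, Finset.mem_sort, Finset.mem_filter]
  simp

lemma prefList_rel [Fintype β] {k j : ℕ} {u v : β}
    (hk : (prefList r)[k]? = some u) (hj : (prefList r)[j]? = some v)
    (hkj : k < j) : r (some u) (some v) := by
  letI := sle_trans r; letI := sle_antisymm r; letI := sle_total r
  obtain ⟨hk', hu⟩ := List.getElem?_eq_some_iff.mp hk
  obtain ⟨hj', hv⟩ := List.getElem?_eq_some_iff.mp hj
  have hsorted : (prefList r).Pairwise (sle r) := Finset.pairwise_sort _ _
  have hrel : sle r ((prefList r).get ⟨k, hk'⟩) ((prefList r).get ⟨j, hj'⟩) :=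
    hsorted.rel_get_of_lt (by exact_mod_cast hkj)
  simp only [List.get_eq_getElem] at hrel
  rw [hu, hv] at hrel
  rcases hrel with h | rfl
  · exact h
  · have hnd : (prefList r).Nodup := Finset.sort_nodup _ _
    have : (⟨k, hk'⟩ : Fin (prefList r).length) = ⟨j, hj'⟩ :=
      (hnd.get_inj_iff).mp (by simpa using hu.trans hv.symm)
    exact absurd (Fin.mk.injEq .. ▸ this) (by simpa using Nat.ne_of_lt hkj)

end PrefList


/-- A many-to-one matching market. -/
structure Mkt (S U : Type*) where
  L : ℕ
  sPref : S → Option U → Option U → Prop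
  uPref : U → Option S → Option S → Prop
  hs : ∀ s, IsStrictTotalOrder (Option U) (sPref s)
  hu : ∀ u, IsStrictTotalOrder (Option S) (uPref u)

namespace Mkt

variable {S U : Type*} [Fintype S] [Fintype U] (M : Mkt S U)

/-- strict preference of university `u` among students -/
def q (u : U) (a b : S) : Prop := M.uPref u (some a) (some b)

lemma qt (u : U) : ∀ a b c, M.q u a b → M.q u b c → M.q u a c :=
  fun _ _ _ h1 h2 => (M.hu u).trans _ _ _ h1 h2

lemma qi (u : U) : ∀ a, ¬ M.q u a a := fun _ => (M.hu u).irrefl _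

lemma qtot (u : U) : ∀ a b : S, a ≠ b → M.q u a b ∨ M.q u b a := by
  intro a b hab
  rcases @trichotomous _ _ (M.hu u).toTrichotomous (some a) (some b) with h | h | h
  · exact Or.inl h
  · exact absurd (Option.some_injective _ h) hab
  · exact Or.inr h

lemma uasym {u : U} {a b : Option S} (h1 : M.uPref u a b) (h2 : M.uPref u b a) : False :=
  (M.hu u).irrefl a ((M.hu u).trans _ _ _ h1 h2)

lemma sasym {s : S} {a b : Option U} (h1 : M.sPref s a b) (h2 : M.sPref s b a) : False :=
  (M.hs s).irrefl a ((M.hs s).trans _ _ _ h1 h2)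

/-- preference list of student `s`, best first. -/
noncomputable def plist (s : S) : List U :=
  letI := M.hs s
  prefList (M.sPref s)

/-- the university that `s` proposes to in state `g`. -/
noncomputable def propTo (g : S → ℕ) (s : S) : Option U := (M.plist s)[g s]?

/-- students proposing to `u` in state `g`. -/
noncomputable def props (g : S → ℕ) (u : U) : Finset S :=
  Finset.univ.filter fun s => M.propTo g s = some u

/-- students proposing to `u` in state `g` that `u` finds acceptable. -/
noncomputable def accProps (g : S → ℕ) (u : U) : Finset S :=
  (M.props g u).filter fun s => M.uPref u (some s) none

/-- students tentatively kept by `u` in state `g`. -/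
noncomputable def keepF (g : S → ℕ) (u : U) : Finset S :=
  keepSet (M.q u) M.L (M.accProps g u)

/-- `s` is rejected in state `g`. -/
def rej (g : S → ℕ) (s : S) : Prop :=
  ∃ u, M.propTo g s = some u ∧ s ∉ M.keepF g u

/-- one round of deferred acceptance. -/
noncomputable def stepF (g : S → ℕ) : S → ℕ :=
  fun s => if M.rej g s then g s + 1 else g s

def Wf (g : S → ℕ) : Prop := ∀ s, g s ≤ (M.plist s).length

def Inv (g : S → ℕ) : Prop := ∀ s u k, k < g s → (M.plist s)[k]? = some u →
  ¬ M.uPref u (some s) none ∨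
    M.L ≤ ((M.accProps g u).filter fun t => M.q u t s).card

def Term (g : S → ℕ) : Prop := ∀ s, ¬ M.rej g s

lemma keepF_subset_acc {g : S → ℕ} {u : U} : M.keepF g u ⊆ M.accProps g u :=
  keepSet_subset

lemma acc_subset_props {g : S → ℕ} {u : U} : M.accProps g u ⊆ M.props g u :=
  Finset.filter_subset _ _

lemma mem_props {g : S → ℕ} {u : U} {s : S} :
    s ∈ M.props g u ↔ M.propTo g s = some u := by
  simp [props]

lemma wf_step {g : S → ℕ} (h : M.Wf g) : M.Wf (M.stepF g) := by
  intro s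
  rw [stepF]
  split
  · next hr =>
    obtain ⟨u, hu', _⟩ := hr
    have := (List.getElem?_eq_some_iff.mp hu').1
    omega
  · exact h s

/-- members of the keep set are not rejected, hence still propose to `u` after a step. -/
lemma keepF_subset_next {g : S → ℕ} {u : U} :
    M.keepF g u ⊆ M.accProps (M.stepF g) u := by
  intro t ht
  have htacc := M.keepF_subset_acc ht
  have htprop : M.propTo g t = some u := M.mem_props.mp (M.acc_subset_props htacc)
  have hnr : ¬ M.rej g t := by
    rintro ⟨u', hu', hku'⟩
    rw [htprop] at hu'
    exact hku' (Option.some_injective _ hu' ▸ ht)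
  have : M.stepF g t = g t := if_neg hnr
  refine Finset.mem_filter.mpr ⟨M.mem_props.mpr ?_, (Finset.mem_filter.mp htacc).2⟩
  rw [propTo, this, ← propTo, htprop]

/-- key counting lemma: the pool of acceptable proposers better than `s` stays large. -/
lemma count_step {g : S → ℕ} {s : S} {u : U}
    (h : M.L ≤ ((M.accProps g u).filter fun t => M.q u t s).card) :
    M.L ≤ ((M.accProps (M.stepF g) u).filter fun t => M.q u t s).card := by
  set B := (M.accProps g u).filter fun t => M.q u t s with hB
  have hBA : B ⊆ M.accProps g u := Finset.filter_subset _ _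
  have hLA : M.L ≤ (M.accProps g u).card := le_trans h (Finset.card_le_card hBA)
  have hcard : (M.keepF g u).card = M.L :=
    keepSet_card_eq (M.qt u) (M.qi u) (M.qtot u) hLA
  have hbetter : ∀ t ∈ M.keepF g u, M.q u t s :=
    keepSet_better (M.qt u) (M.qtot u) hBA h (fun b hb => (Finset.mem_filter.mp hb).2)
  have hsub : M.keepF g u ⊆ (M.accProps (M.stepF g) u).filter fun t => M.q u t s :=
    fun t ht => Finset.mem_filter.mpr ⟨M.keepF_subset_next ht, hbetter t ht⟩
  calc M.L = (M.keepF g u).card := hcard.symm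
    _ ≤ _ := Finset.card_le_card hsub

lemma inv_step {g : S → ℕ} (h : M.Inv g) : M.Inv (M.stepF g) := by
  intro s u k hk hget
  by_cases hok : k < g s
  · rcases h s u k hok hget with h1 | h1
    · exact Or.inl h1
    · exact Or.inr (M.count_step h1)
  · -- then s was rejected this round and k = g s
    have hrs : M.rej g s := by
      by_contra hnr
      rw [stepF, if_neg hnr] at hk
      exact hok hk
    have hkg : k = g s := by
      rw [stepF, if_pos hrs] at hk
      omega
    subst hkg
    obtain ⟨u', hu', hku'⟩ := hrs
    rw [propTo, hget] at hu'
    obtain rfl : u = u' := Option.some_injective _ hu'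
    by_cases hacc : M.uPref u (some s) none
    · right
      apply M.count_step
      have hsmem : s ∈ M.accProps g u := by
        refine Finset.mem_filter.mpr ⟨M.mem_props.mpr ?_, hacc⟩
        rw [propTo, hget]
      have : ¬ rankIn (M.q u) (M.accProps g u) s < M.L := by
        intro hlt
        exact hku' (Finset.mem_filter.mpr ⟨hsmem, hlt⟩)
      rw [not_lt, rankIn] at this
      exact this
    · exact Or.inl hacc

lemma term_props_eq_keep {g : S → ℕ} (h : M.Term g) (u : U) :
    M.props g u = M.keepF g u := by
  apply Finset.Subset.antisymm
  · intro s hsp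
    have := h s
    rw [rej] at this
    push_neg at this
    exact this u (M.mem_props.mp hsp)
  · exact fun s hs => M.acc_subset_props (M.keepF_subset_acc hs)

lemma term_acc_eq_props {g : S → ℕ} (h : M.Term g) (u : U) :
    M.accProps g u = M.props g u := by
  apply Finset.Subset.antisymm (Finset.filter_subset _ _)
  intro s hs
  rw [term_props_eq_keep M h u] at hs
  exact M.keepF_subset_acc hs


lemma term_stepF_eq {g : S → ℕ} (h : M.Term g) : M.stepF g = g :=
  funext fun s => if_neg (h s)

lemma sum_lt {g : S → ℕ} (h : ¬ M.Term g) : ∑ s, g s < ∑ s, M.stepF g s := by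
  rw [Term] at h
  push_neg at h
  obtain ⟨s, hs⟩ := h
  apply Finset.sum_lt_sum
  · intro i _
    rw [stepF]
    split <;> omega
  · exact ⟨s, Finset.mem_univ s, by rw [stepF, if_pos hs]; omega⟩

noncomputable def iter (n : ℕ) : S → ℕ := (M.stepF)^[n] (fun _ => 0)

lemma iter_wf (n : ℕ) : M.Wf (M.iter n) := by
  induction n with
  | zero => intro s; simp [iter]
  | succ n ih =>
    rw [iter, Function.iterate_succ_apply']
    exact M.wf_step ih

lemma iter_inv (n : ℕ) : M.Inv (M.iter n) := by
  induction n with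
  | zero => intro s u k hk _; simp [iter] at hk
  | succ n ih =>
    rw [iter, Function.iterate_succ_apply']
    exact M.inv_step ih

lemma iter_term_or (n : ℕ) : M.Term (M.iter n) ∨ n ≤ ∑ s, M.iter n s := by
  induction n with
  | zero => exact Or.inr (by omega)
  | succ n ih =>
    rcases ih with h | h
    · left
      rw [iter, Function.iterate_succ_apply',
        show (M.stepF^[n] fun _ => 0) = M.iter n from rfl, M.term_stepF_eq h]
      exact h
    · by_cases ht : M.Term (M.iter n)
      · left
        rw [iter, Function.iterate_succ_apply',
          show (M.stepF^[n] fun _ => 0) = M.iter n from rfl, M.term_stepF_eq ht]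
        exact ht
      · right
        rw [iter, Function.iterate_succ_apply',
          show (M.stepF^[n] fun _ => 0) = M.iter n from rfl]
        have h2 : ∑ s, M.iter n s < ∑ s, M.stepF (M.iter n) s := M.sum_lt ht
        omega

lemma exists_term : ∃ g : S → ℕ, M.Term g ∧ M.Inv g ∧ M.Wf g := by
  set N := ∑ s : S, (M.plist s).length with hN
  rcases M.iter_term_or (N + 1) with h | h
  · exact ⟨M.iter (N + 1), h, M.iter_inv _, M.iter_wf _⟩
  · exfalso
    have hle : ∑ s, M.iter (N + 1) s ≤ N :=
      Finset.sum_le_sum fun i _ => M.iter_wf (N + 1) i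
    omega

end Mkt
end StableAux

/-- Every many-to-one matching market admits at least one stable matching. -/
theorem exists_stable_matching {S U : Type*} [Fintype S] [Fintype U]
    (L : ℕ) (hL : 1 ≤ L)
    (sPref : S → Option U → Option U → Prop) (uPref : U → Option S → Option S → Prop)
    (hs : ∀ s, IsStrictTotalOrder (Option U) (sPref s))
    (hu : ∀ u, IsStrictTotalOrder (Option S) (uPref u)) :
    ∃ m : S → Option U, IsStableMatching L sPref uPref m := by
  classical
  set M : StableAux.Mkt S U := ⟨L, sPref, uPref, hs, hu⟩ with hM
  obtain ⟨g, hterm, hinv, hwf⟩ := M.exists_term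
  have hset : ∀ u, assignedSet (M.propTo g) u = ↑(M.props g u) := by
    intro u
    ext t
    simp [assignedSet, StableAux.Mkt.mem_props]
  have hcardle : ∀ u, (M.props g u).card ≤ L := by
    intro u
    rw [M.term_props_eq_keep hterm]
    exact StableAux.keepSet_card_le (M.qt u) (M.qi u) (M.qtot u)
  refine ⟨M.propTo g, ?_, ?_, ?_, ?_⟩
  · -- IsMatching
    intro u
    rw [hset u, Set.ncard_coe_finset]
    exact hcardle u
  · -- student individual rationality
    intro s u hsu
    haveI := hs s
    rw [StableAux.Mkt.propTo] at hsu
    exact (StableAux.mem_prefList (sPref s)).mp (List.mem_of_getElem? hsu)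
  · -- university individual rationality
    intro s u hsu
    have : s ∈ M.accProps g u := by
      rw [M.term_acc_eq_props hterm]
      exact M.mem_props.mpr hsu
    exact (Finset.mem_filter.mp this).2
  · -- no blocking pair
    rintro s u ⟨hb1, hb2⟩
    haveI := hs s
    have hacc : uPref u (some s) none := by
      rcases hb2 with ⟨_, h⟩ | ⟨t, ht, hst⟩
      · exact h
      · have htmem : t ∈ M.accProps g u := by
          rw [M.term_acc_eq_props hterm]
          exact M.mem_props.mpr ht
        exact (hu u).trans _ _ _ hst (Finset.mem_filter.mp htmem).2
    have hsacc : sPref s (some u) none := by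
      cases hms : M.propTo g s with
      | none => rw [hms] at hb1; exact hb1
      | some v =>
        rw [hms] at hb1
        rw [StableAux.Mkt.propTo] at hms
        have hv : v ∈ M.plist s := List.mem_of_getElem? hms
        exact (hs s).trans _ _ _ hb1 ((StableAux.mem_prefList (sPref s)).mp hv)
    have humem : u ∈ M.plist s := (StableAux.mem_prefList (sPref s)).mpr hsacc
    obtain ⟨n, hn⟩ := List.mem_iff_get.mp humem
    have hget : (M.plist s)[(n : ℕ)]? = some u := by
      rw [List.getElem?_eq_getElem n.isLt, ← hn, List.get_eq_getElem]
    have hlt : (n : ℕ) < g s := by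
      cases hms : M.propTo g s with
      | none =>
        rw [StableAux.Mkt.propTo] at hms
        exact lt_of_lt_of_le n.isLt (List.getElem?_eq_none_iff.mp hms)
      | some v =>
        rw [hms] at hb1
        rw [StableAux.Mkt.propTo] at hms
        by_contra hge
        push_neg at hge
        rcases eq_or_lt_of_le hge with heq | hlt2
        · rw [heq, hget] at hms
          exact (hs s).irrefl _ (Option.some_injective _ hms ▸ hb1)
        · exact M.sasym hb1 (StableAux.prefList_rel (sPref s) hms hget hlt2)
    rcases hinv s u (n : ℕ) hlt hget with h1 | h1
    · exact h1 hacc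
    · set B := (M.accProps g u).filter (fun t => M.q u t s) with hB
      have hBsub : B ⊆ M.props g u :=
        subset_trans (Finset.filter_subset _ _) M.acc_subset_props
      have hBeq : B = M.props g u :=
        Finset.eq_of_subset_of_card_le hBsub (le_trans (hcardle u) h1)
      rcases hb2 with ⟨hlt', _⟩ | ⟨t, ht, hst⟩
      · rw [hset u, Set.ncard_coe_finset] at hlt'
        have : (M.props g u).card = B.card := by rw [hBeq]
        have hML : M.L = L := rfl
        omega
      · have htB : t ∈ B := hBeq ▸ M.mem_props.mpr ht
        exact M.uasym hst (Finset.mem_filter.mp htB).2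
end

section
/- In every many-to-one matching market there exists a stable matching M* such that for every university u, the set M*(u) of students assigned to u consists precisely of the min(L, |S(u)|) students in S(u) that u most prefers, where S(u) is the set of stable partners of u; moreover M* is the unique stable matching with this property. -/
/-- `stablePartners L sPref uPref u` is the set `S(u)` of stable partners of university
`u`: the students assigned to `u` in at least one stable matching. -/
def stablePartners {S U : Type*} (L : ℕ)
    (sPref : S → Option U → Option U → Prop) (uPref : U → Option S → Option S → Prop)
    (u : U) : Set S :=
  {s | ∃ m : S → Option U, IsStableMatching L sPref uPref m ∧ m s = some u}




lemma exists_max_rel {α : Type*} {r : α → α → Prop}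
    (htr : ∀ a b c, r a b → r b c → r a c)
    (htri : ∀ a b, a ≠ b → r a b ∨ r b a)
    (A : Set α) (hfin : A.Finite) (hne : A.Nonempty) :
    ∃ u ∈ A, ∀ v ∈ A, v ≠ u → r u v := by
  classical
  obtain ⟨F, rfl⟩ : ∃ F : Finset α, A = ↑F := ⟨hfin.toFinset, by simp⟩
  suffices h : ∀ F : Finset α, F.Nonempty → ∃ u ∈ F, ∀ v ∈ F, v ≠ u → r u v by
    obtain ⟨u, hu, hmax⟩ := h F (by simpa using hne)
    exact ⟨u, by simpa using hu, fun v hv hvu => hmax v (by simpa using hv) hvu⟩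
  intro F
  induction F using Finset.cons_induction with
  | empty => simp
  | cons a F haF ih =>
    intro _
    rcases F.eq_empty_or_nonempty with rfl | hFne
    · exact ⟨a, by simp, by simp⟩
    · obtain ⟨u, huF, hmax⟩ := ih hFne
      have hau : a ≠ u := fun h => haF (h ▸ huF)
      rcases htri a u hau with h1 | h1
      · refine ⟨a, Finset.mem_cons_self _ _, ?_⟩
        intro v hv hva
        rcases Finset.mem_cons.mp hv with rfl | hvF
        · exact absurd rfl hva
        · rcases eq_or_ne v u with rfl | hvu
          · exact h1
          · exact htr _ _ _ h1 (hmax v hvF hvu)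
      · refine ⟨u, Finset.mem_cons.mpr (Or.inr huF), ?_⟩
        intro v hv hvu
        rcases Finset.mem_cons.mp hv with rfl | hvF
        · exact h1
        · exact hmax v hvF hvu

section DA

variable {S U : Type*}

/-- The set of universities that have proposed to `s` (per `P`) and are acceptable to `s`. -/
def daGood (sPref : S → Option U → Option U → Prop) (P : U → Set S) (s : S) : Set U :=
  {u | s ∈ P u ∧ sPref s (some u) none}

open Classical in
/-- The best element of a set of universities according to `s`'s preference, if a maximum exists. -/
noncomputable def daBest (sPref : S → Option U → Option U → Prop) (s : S) (G : Set U) : Option U :=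
  if h : ∃ u, u ∈ G ∧ ∀ v ∈ G, v ≠ u → sPref s (some u) (some v) then some h.choose else none

/-- The proposal currently held by student `s`. -/
noncomputable def daHold (sPref : S → Option U → Option U → Prop) (P : U → Set S) (s : S) :
    Option U := daBest sPref s (daGood sPref P s)

/-- The students currently holding a proposal of `u`. -/
def daHoldings (sPref : S → Option U → Option U → Prop) (P : U → Set S) (u : U) : Set S :=
  {s | daHold sPref P s = some u}

lemma daBest_spec {sPref : S → Option U → Option U → Prop} {s : S} {G : Set U} {u : U}
    (h : daBest sPref s G = some u) :
    u ∈ G ∧ ∀ v ∈ G, v ≠ u → sPref s (some u) (some v) := by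
  unfold daBest at h
  split_ifs at h with hex
  obtain rfl : hex.choose = u := Option.some_injective _ h
  exact hex.choose_spec

lemma daBest_of_mem [Fintype U] {sPref : S → Option U → Option U → Prop}
    (hs : ∀ s, IsStrictTotalOrder (Option U) (sPref s)) {s : S} {G : Set U} {u : U}
    (hu : u ∈ G) :
    ∃ w, daBest sPref s G = some w ∧ w ∈ G ∧ (w = u ∨ sPref s (some w) (some u)) := by
  haveI := hs s
  have htr : ∀ a b c : U, sPref s (some a) (some b) → sPref s (some b) (some c) →
      sPref s (some a) (some c) := fun a b c h1 h2 => _root_.trans_of (sPref s) h1 h2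
  have htri : ∀ a b : U, a ≠ b → sPref s (some a) (some b) ∨ sPref s (some b) (some a) := by
    intro a b hab
    rcases trichotomous_of (sPref s) (some a) (some b) with h | h | h
    · exact Or.inl h
    · exact absurd (Option.some_injective _ h) hab
    · exact Or.inr h
  have hex : ∃ w, w ∈ G ∧ ∀ v ∈ G, v ≠ w → sPref s (some w) (some v) := by
    obtain ⟨w, hw, hmax⟩ := exists_max_rel htr htri G (Set.toFinite _) ⟨u, hu⟩
    exact ⟨w, hw, hmax⟩
  refine ⟨hex.choose, ?_, hex.choose_spec.1, ?_⟩
  · unfold daBest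
    rw [dif_pos hex]
  · rcases eq_or_ne hex.choose u with h | h
    · exact Or.inl h
    · exact Or.inr (hex.choose_spec.2 u hu (Ne.symm h))

lemma daBest_eq [Fintype U] {sPref : S → Option U → Option U → Prop}
    (hs : ∀ s, IsStrictTotalOrder (Option U) (sPref s)) {s : S} {G : Set U} {u : U}
    (hu : u ∈ G) (hmax : ∀ v ∈ G, v ≠ u → sPref s (some u) (some v)) :
    daBest sPref s G = some u := by
  haveI := hs s
  obtain ⟨w, hw, hwG, hwu⟩ := daBest_of_mem hs hu
  rcases hwu with rfl | hwu
  · exact hw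
  · have hne : w ≠ u := fun h => irrefl_of (sPref s) (some u) (h ▸ hwu)
    exact absurd (hmax w hwG hne) fun h => irrefl_of (sPref s) (some u)
      (_root_.trans_of (sPref s) h hwu)

end DA

set_option linter.unusedSectionVars false
section Main
variable {S U : Type*} [Fintype S] [Fintype U]
variable {L : ℕ} {sPref : S → Option U → Option U → Prop}
  {uPref : U → Option S → Option S → Prop}

lemma daHold_spec {P : U → Set S} {s : S} {u : U} (h : daHold sPref P s = some u) :
    (s ∈ P u ∧ sPref s (some u) none) ∧
      ∀ v, (s ∈ P v ∧ sPref s (some v) none) → v ≠ u → sPref s (some u) (some v) :=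
  daBest_spec h

lemma daHold_of_mem (hs : ∀ s, IsStrictTotalOrder (Option U) (sPref s))
    {P : U → Set S} {s : S} {u : U} (h1 : s ∈ P u) (h2 : sPref s (some u) none) :
    ∃ w, daHold sPref P s = some w ∧ (s ∈ P w ∧ sPref s (some w) none) ∧
      (w = u ∨ sPref s (some w) (some u)) :=
  daBest_of_mem hs ⟨h1, h2⟩

lemma coreBlock
    (hs : ∀ s, IsStrictTotalOrder (Option U) (sPref s))
    (hu : ∀ u, IsStrictTotalOrder (Option S) (uPref u))
    {P : U → Set S}
    (hJ1 : ∀ u s, s ∈ P u → uPref u (some s) none)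
    (hJ2 : ∀ u s t, s ∈ P u → uPref u (some t) (some s) → t ∈ P u)
    (hK : ∀ u, (daHoldings sPref P u).ncard ≤ L)
    (hI : ∀ m, IsStableMatching L sPref uPref m → ∀ s u, m s = some u → s ∈ P u →
      daHold sPref P s = some u)
    {m : S → Option U} (hm : IsStableMatching L sPref uPref m)
    {s : S} {v : U} (hsv : daHold sPref P s = some v)
    (hpref : sPref s (some v) (m s)) : False := by
  haveI := hs s
  obtain ⟨⟨hsPv, hvacc⟩, -⟩ := daHold_spec hsv
  have hmsv : m s ≠ some v := fun h =>
    irrefl_of (sPref s) (some v) (by rw [h] at hpref; exact hpref)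
  by_cases hblk : ∃ t, m t = some v ∧ uPref v (some s) (some t)
  · exact hm.2.2.2 s v ⟨hpref, Or.inr hblk⟩
  · push_neg at hblk
    have hsub : assignedSet m v ⊆ daHoldings sPref P v := by
      intro t ht
      have htv : m t = some v := ht
      have hts : t ≠ s := fun h => hmsv (h ▸ htv)
      haveI := hu v
      have hts' : uPref v (some t) (some s) := by
        rcases trichotomous_of (uPref v) (some t) (some s) with h | h | h
        · exact h
        · exact absurd (Option.some_injective _ h) hts
        · exact absurd h (hblk t htv)
      exact hI m hm t v htv (hJ2 v s t hsPv hts')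
    have hss : assignedSet m v ⊂ daHoldings sPref P v :=
      (Set.ssubset_iff_of_subset hsub).mpr ⟨s, hsv, hmsv⟩
    have hlt : (assignedSet m v).ncard < L :=
      lt_of_lt_of_le (Set.ncard_lt_ncard hss (Set.toFinite _)) (hK v)
    exact hm.2.2.2 s v ⟨hpref, Or.inl ⟨hlt, hJ1 v s hsPv⟩⟩

lemma newBlock
    (hu : ∀ u, IsStrictTotalOrder (Option S) (uPref u))
    {P : U → Set S}
    (hI : ∀ m, IsStableMatching L sPref uPref m → ∀ s u, m s = some u → s ∈ P u →
      daHold sPref P s = some u)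
    {u₀ : U} {s₀ : S}
    (hroom : (daHoldings sPref P u₀).ncard < L)
    (hacc : uPref u₀ (some s₀) none)
    (hmax : ∀ t, uPref u₀ (some t) none → t ∉ P u₀ → t ≠ s₀ → uPref u₀ (some s₀) (some t))
    {m : S → Option U} (hm : IsStableMatching L sPref uPref m)
    (hpref : sPref s₀ (some u₀) (m s₀))
    (hs : ∀ s, IsStrictTotalOrder (Option U) (sPref s)) : False := by
  haveI := hs s₀
  have hms : m s₀ ≠ some u₀ := fun h =>
    irrefl_of (sPref s₀) (some u₀) (by rw [h] at hpref; exact hpref)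
  by_cases hblk : ∃ t, m t = some u₀ ∧ uPref u₀ (some s₀) (some t)
  · exact hm.2.2.2 s₀ u₀ ⟨hpref, Or.inr hblk⟩
  · push_neg at hblk
    have hsub : assignedSet m u₀ ⊆ daHoldings sPref P u₀ := by
      intro t ht
      have htv : m t = some u₀ := ht
      have hts : t ≠ s₀ := fun h => hms (h ▸ htv)
      have htacc : uPref u₀ (some t) none := hm.2.2.1 t u₀ htv
      have htP : t ∈ P u₀ := by
        by_contra hP
        exact hblk t htv (hmax t htacc hP hts)
      exact hI m hm t u₀ htv htP
    have hlt : (assignedSet m u₀).ncard < L :=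
      lt_of_le_of_lt (Set.ncard_le_ncard hsub (Set.toFinite _)) hroom
    exact hm.2.2.2 s₀ u₀ ⟨hpref, Or.inl ⟨hlt, hacc⟩⟩

end Main

section Main2
set_option linter.unusedSectionVars false
set_option maxHeartbeats 1000000
variable {S U : Type*} [Fintype S] [Fintype U]
variable {L : ℕ} {sPref : S → Option U → Option U → Prop}
  {uPref : U → Option S → Option S → Prop}

/-- The invariant maintained by university-proposing deferred acceptance. -/
def DAInv (L : ℕ) (sPref : S → Option U → Option U → Prop)
    (uPref : U → Option S → Option S → Prop) (P : U → Set S) : Prop :=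
  (∀ u s, s ∈ P u → uPref u (some s) none) ∧
  (∀ u s t, s ∈ P u → uPref u (some t) (some s) → t ∈ P u) ∧
  (∀ u, (daHoldings sPref P u).ncard ≤ L) ∧
  (∀ m, IsStableMatching L sPref uPref m → ∀ s u, m s = some u → s ∈ P u →
    daHold sPref P s = some u)

lemma daHold_eq (hs : ∀ s, IsStrictTotalOrder (Option U) (sPref s))
    {P : U → Set S} {s : S} {u : U} (h1 : s ∈ P u) (h2 : sPref s (some u) none)
    (hmax : ∀ v, s ∈ P v → sPref s (some v) none → v ≠ u → sPref s (some u) (some v)) :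
    daHold sPref P s = some u :=
  daBest_eq hs ⟨h1, h2⟩ (fun v hv hne => hmax v hv.1 hv.2 hne)

lemma step_inv
    (hs : ∀ s, IsStrictTotalOrder (Option U) (sPref s))
    (hu : ∀ u, IsStrictTotalOrder (Option S) (uPref u))
    {P : U → Set S} (hInv : DAInv L sPref uPref P)
    {u₀ : U} {s₀ : S}
    (hroom : (daHoldings sPref P u₀).ncard < L)
    (hacc : uPref u₀ (some s₀) none)
    (hnot : s₀ ∉ P u₀)
    (hmax : ∀ t, uPref u₀ (some t) none → t ∉ P u₀ → t ≠ s₀ → uPref u₀ (some s₀) (some t))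
    {P' : U → Set S} (hmem : ∀ u t, t ∈ P' u ↔ (t ∈ P u ∨ (u = u₀ ∧ t = s₀))) :
    DAInv L sPref uPref P' := by
  obtain ⟨hJ1, hJ2, hK, hI⟩ := hInv
  have hmono : ∀ u t, t ∈ P u → t ∈ P' u := fun u t h => (hmem u t).mpr (Or.inl h)
  have hgood : ∀ t, t ≠ s₀ → daGood sPref P' t = daGood sPref P t := by
    intro t ht
    ext v
    unfold daGood
    simp only [Set.mem_setOf_eq, hmem]
    constructor
    · rintro ⟨h1 | ⟨rfl, rfl⟩, h2⟩
      · exact ⟨h1, h2⟩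
      · exact absurd rfl ht
    · rintro ⟨h1, h2⟩; exact ⟨Or.inl h1, h2⟩
  have hhold : ∀ t, t ≠ s₀ → daHold sPref P' t = daHold sPref P t := by
    intro t ht; unfold daHold; rw [hgood t ht]
  refine ⟨?_, ?_, ?_, ?_⟩
  · -- J1
    intro u s h
    rcases (hmem u s).mp h with h | ⟨rfl, rfl⟩
    · exact hJ1 u s h
    · exact hacc
  · -- J2
    intro u s t hsP' hts
    rcases (hmem u s).mp hsP' with h | ⟨rfl, rfl⟩
    · exact hmono u t (hJ2 u s t h hts)
    · haveI := hu u
      have htacc : uPref u (some t) none := _root_.trans_of (uPref u) hts hacc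
      by_cases htP : t ∈ P u
      · exact hmono u t htP
      · rcases eq_or_ne t s with rfl | hne
        · exact absurd hts (irrefl_of (uPref u) (some t))
        · exact absurd (hmax t htacc htP hne)
            (fun h => irrefl_of (uPref u) (some t) (_root_.trans_of (uPref u) hts h))
  · -- K
    intro u
    by_cases hu0 : u = u₀
    · subst hu0
      have hsub : daHoldings sPref P' u ⊆ insert s₀ (daHoldings sPref P u) := by
        intro t ht
        rcases eq_or_ne t s₀ with rfl | hne
        · exact Set.mem_insert _ _
        · exact Set.mem_insert_of_mem _ (by rwa [daHoldings, Set.mem_setOf_eq, hhold t hne] at ht)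
      calc (daHoldings sPref P' u).ncard ≤ (insert s₀ (daHoldings sPref P u)).ncard :=
              Set.ncard_le_ncard hsub (Set.toFinite _)
        _ ≤ (daHoldings sPref P u).ncard + 1 := Set.ncard_insert_le _ _
        _ ≤ L := by omega
    · have hsub : daHoldings sPref P' u ⊆ daHoldings sPref P u := by
        intro t ht
        have ht' : daHold sPref P' t = some u := ht
        rcases eq_or_ne t s₀ with rfl | hne
        · obtain ⟨⟨hP'u, haccu⟩, hmx⟩ := daHold_spec ht'
          have hPu : t ∈ P u := by
            rcases (hmem u t).mp hP'u with h | ⟨h, -⟩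
            · exact h
            · exact absurd h hu0
          show daHold sPref P t = some u
          refine daHold_eq hs hPu haccu ?_
          intro v hv hvacc hvu
          exact hmx v ⟨hmono v t hv, hvacc⟩ hvu
        · rwa [daHoldings, Set.mem_setOf_eq, hhold t hne] at ht
      exact le_trans (Set.ncard_le_ncard hsub (Set.toFinite _)) (hK u)
  · -- I
    intro m hm s u hmsu hsP'
    rcases eq_or_ne s s₀ with rfl | hss
    · haveI := hs s
      have huacc : sPref s (some u) none := hm.2.1 s u hmsu
      obtain ⟨w, hw, ⟨hwP', hwacc⟩, hwu⟩ := daHold_of_mem hs hsP' huacc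
      rcases hwu with rfl | hwlt
      · exact hw
      · exfalso
        have hprefw : sPref s (some w) (m s) := by rw [hmsu]; exact hwlt
        rcases (hmem w s).mp hwP' with hPw | ⟨rfl, -⟩
        · obtain ⟨w2, hw2, ⟨hw2P, hw2acc⟩, hw2w⟩ := daHold_of_mem hs hPw hwacc
          have hpref2 : sPref s (some w2) (m s) := by
            rcases hw2w with rfl | h
            · exact hprefw
            · exact _root_.trans_of (sPref s) h hprefw
          exact coreBlock hs hu hJ1 hJ2 hK hI hm hw2 hpref2
        · exact newBlock hu hI hroom hacc hmax hm hprefw hs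
    · have hsP : s ∈ P u := by
        rcases (hmem u s).mp hsP' with h | ⟨-, h⟩
        · exact h
        · exact absurd h hss
      rw [hhold s hss]
      exact hI m hm s u hmsu hsP

end Main2

section Main3
set_option linter.unusedSectionVars false
set_option maxHeartbeats 1000000
variable {S U : Type*} [Fintype S] [Fintype U]
variable {L : ℕ} {sPref : S → Option U → Option U → Prop}
  {uPref : U → Option S → Option S → Prop}

lemma exists_good_state
    (hs : ∀ s, IsStrictTotalOrder (Option U) (sPref s))
    (hu : ∀ u, IsStrictTotalOrder (Option S) (uPref u)) :
    ∃ P : U → Set S, DAInv L sPref uPref P ∧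
      (∀ u, (daHoldings sPref P u).ncard < L → ∀ s, uPref u (some s) none → s ∈ P u) := by
  classical
  set N : Set ℕ := {n | ∃ P : U → Set S, DAInv L sPref uPref P ∧ n = ∑ u : U, (P u).ncard}
    with hN
  have hInv0 : DAInv L sPref uPref (fun _ : U => (∅ : Set S)) := by
    refine ⟨fun u s h => absurd h (Set.notMem_empty s),
      fun u s t h _ => absurd h (Set.notMem_empty s), fun u => ?_, ?_⟩
    · have : daHoldings sPref (fun _ : U => (∅ : Set S)) u = ∅ := by
        ext t
        simp only [daHoldings, Set.mem_setOf_eq, Set.mem_empty_iff_false, iff_false]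
        intro h
        obtain ⟨⟨h1, -⟩, -⟩ := daHold_spec h
        exact h1
      rw [this, Set.ncard_empty]
      exact Nat.zero_le L
    · intro m hm s u hmsu h
      exact absurd h (Set.notMem_empty s)
  have hne : N.Nonempty := ⟨∑ u : U, (∅ : Set S).ncard, fun _ => ∅, hInv0, rfl⟩
  have hbdd : BddAbove N := by
    refine ⟨Fintype.card U * Fintype.card S, ?_⟩
    rintro n ⟨P, -, rfl⟩
    calc ∑ u : U, (P u).ncard ≤ ∑ _u : U, Fintype.card S := by
          refine Finset.sum_le_sum fun u _ => ?_
          have := Set.ncard_le_ncard (Set.subset_univ (P u)) (Set.toFinite _)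
          rwa [Set.ncard_univ, Nat.card_eq_fintype_card] at this
      _ = Fintype.card U * Fintype.card S := by
          rw [Finset.sum_const, Finset.card_univ, smul_eq_mul]
  obtain ⟨P, hInv, hPn⟩ := Nat.sSup_mem hne hbdd
  refine ⟨P, hInv, ?_⟩
  by_contra hterm
  push_neg at hterm
  obtain ⟨u₀, hroom, s₁, hacc₁, hnot₁⟩ := hterm
  haveI := hu u₀
  -- pick the best unproposed acceptable student s₀
  have htr : ∀ a b c : S, uPref u₀ (some a) (some b) → uPref u₀ (some b) (some c) →
      uPref u₀ (some a) (some c) := fun a b c h1 h2 => _root_.trans_of (uPref u₀) h1 h2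
  have htri : ∀ a b : S, a ≠ b → uPref u₀ (some a) (some b) ∨ uPref u₀ (some b) (some a) := by
    intro a b hab
    rcases trichotomous_of (uPref u₀) (some a) (some b) with h | h | h
    · exact Or.inl h
    · exact absurd (Option.some_injective _ h) hab
    · exact Or.inr h
  obtain ⟨s₀, hs₀C, hs₀max⟩ := exists_max_rel htr htri
    {s : S | uPref u₀ (some s) none ∧ s ∉ P u₀} (Set.toFinite _) ⟨s₁, hacc₁, hnot₁⟩
  obtain ⟨hacc, hnot⟩ := hs₀C
  set P' : U → Set S := fun u => if u = u₀ then insert s₀ (P u₀) else P u with hP'def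
  have hmem : ∀ u t, t ∈ P' u ↔ (t ∈ P u ∨ (u = u₀ ∧ t = s₀)) := by
    intro u t
    by_cases h : u = u₀
    · subst h
      simp only [hP'def, if_pos rfl, Set.mem_insert_iff]
      tauto
    · simp only [hP'def, if_neg h, h, false_and, or_false]
  have hInv' : DAInv L sPref uPref P' :=
    step_inv hs hu hInv hroom hacc hnot
      (fun t htacc htP htne => hs₀max t ⟨htacc, htP⟩ htne) hmem
  have hsum : ∑ u : U, (P' u).ncard = (∑ u : U, (P u).ncard) + 1 := by
    have h1 : ∀ u : U, u ≠ u₀ → (P' u).ncard = (P u).ncard := by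
      intro u h; simp only [hP'def, if_neg h]
    have h2 : (P' u₀).ncard = (P u₀).ncard + 1 := by
      simp only [hP'def, if_pos rfl]
      exact Set.ncard_insert_of_notMem hnot (Set.toFinite _)
    rw [← Finset.sum_erase_add _ _ (Finset.mem_univ u₀),
        ← Finset.sum_erase_add _ (fun u => (P u).ncard) (Finset.mem_univ u₀), h2]
    rw [Finset.sum_congr rfl (fun u hu' => h1 u (Finset.ne_of_mem_erase hu'))]
    omega
  have hmemN : (∑ u : U, (P u).ncard) + 1 ∈ N := ⟨P', hInv', by rw [hsum]⟩
  have := le_csSup hbdd hmemN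
  omega
end Main3

section Main4
set_option linter.unusedSectionVars false
set_option maxHeartbeats 1000000
variable {S U : Type*} [Fintype S] [Fintype U]
variable {L : ℕ} {sPref : S → Option U → Option U → Prop}
  {uPref : U → Option S → Option S → Prop}

lemma exists_pessimal_stable
    (hs : ∀ s, IsStrictTotalOrder (Option U) (sPref s))
    (hu : ∀ u, IsStrictTotalOrder (Option S) (uPref u)) :
    ∃ mstar : S → Option U, IsStableMatching L sPref uPref mstar ∧
      ∀ m, IsStableMatching L sPref uPref m →
        ∀ s, m s = mstar s ∨ sPref s (m s) (mstar s) := by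
  obtain ⟨P, hInv, hT⟩ := exists_good_state hs hu (L := L) (uPref := uPref)
  obtain ⟨hJ1, hJ2, hK, hI⟩ := hInv
  refine ⟨fun s => daHold sPref P s, ?_, ?_⟩
  · have hassigned : ∀ u, assignedSet (fun s => daHold sPref P s) u = daHoldings sPref P u :=
      fun u => rfl
    refine ⟨fun u => by rw [hassigned u]; exact hK u, ?_, ?_, ?_⟩
    · intro s u h
      exact (daHold_spec h).1.2
    · intro s u h
      exact hJ1 u s (daHold_spec h).1.1
    · rintro s u ⟨hpref, hblk⟩
      beta_reduce at hpref hblk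
      haveI := hs s
      have huacc : sPref s (some u) none := by
        cases hms : daHold sPref P s with
        | none => rw [hms] at hpref; exact hpref
        | some u0 =>
          rw [hms] at hpref
          exact _root_.trans_of (sPref s) hpref (daHold_spec hms).1.2
      have hsPu : s ∈ P u := by
        rcases hblk with ⟨hlt, hacc⟩ | ⟨t, htu, hst⟩
        · exact hT u (by rw [← hassigned u]; exact hlt) s hacc
        · have htP : t ∈ P u := (daHold_spec htu).1.1
          exact hJ2 u t s htP hst
      obtain ⟨w, hw, -, hwu⟩ := daHold_of_mem hs hsPu huacc
      rw [hw] at hpref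
      rcases hwu with rfl | hwu
      · exact irrefl_of (sPref s) (some w) hpref
      · exact irrefl_of (sPref s) (some u) (_root_.trans_of (sPref s) hpref hwu)
  · intro m hm s
    show m s = daHold sPref P s ∨ sPref s (m s) (daHold sPref P s)
    haveI := hs s
    cases hms : daHold sPref P s with
    | none =>
      cases hm' : m s with
      | none => exact Or.inl rfl
      | some u' => exact Or.inr (hm.2.1 s u' hm')
    | some v =>
      rcases eq_or_ne (m s) (some v) with h | h
      · exact Or.inl h
      · rcases trichotomous_of (sPref s) (m s) (some v) with h1 | h1 | h1
        · exact Or.inr h1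
        · exact absurd h1 h
        · exact absurd (coreBlock hs hu hJ1 hJ2 hK hI hm hms h1) (fun hF => hF)
end Main4

/-- There exists a stable matching `m*` such that every university `u` is assigned
precisely the `min L |S(u)|` students of `S(u)` that `u` most prefers, and `m*` is the
unique stable matching with this property. -/
theorem exists_unique_university_optimal_stable_matching
    {S U : Type*} [Fintype S] [Fintype U]
    (L : ℕ) (hL : 1 ≤ L)
    (sPref : S → Option U → Option U → Prop) (uPref : U → Option S → Option S → Prop)
    (hs : ∀ s, IsStrictTotalOrder (Option U) (sPref s))
    (hu : ∀ u, IsStrictTotalOrder (Option S) (uPref u)) :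
    ∃! m : S → Option U,
      IsStableMatching L sPref uPref m ∧
        ∀ u : U,
          assignedSet m u ⊆ stablePartners L sPref uPref u ∧
          (assignedSet m u).ncard = min L (stablePartners L sPref uPref u).ncard ∧
          ∀ t ∈ stablePartners L sPref uPref u, t ∉ assignedSet m u →
            ∀ t' ∈ assignedSet m u, uPref u (some t') (some t) := by
  classical
  obtain ⟨mstar, hstable, hpess⟩ := exists_pessimal_stable hs hu (L := L)
  have hprop : ∀ u : U,
      assignedSet mstar u ⊆ stablePartners L sPref uPref u ∧
      (assignedSet mstar u).ncard = min L (stablePartners L sPref uPref u).ncard ∧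
      (∀ t ∈ stablePartners L sPref uPref u, t ∉ assignedSet mstar u →
        ∀ t' ∈ assignedSet mstar u, uPref u (some t') (some t)) := by
    intro u
    have hsub : assignedSet mstar u ⊆ stablePartners L sPref uPref u :=
      fun t ht => ⟨mstar, hstable, ht⟩
    have hthird : ∀ t ∈ stablePartners L sPref uPref u, t ∉ assignedSet mstar u →
        ∀ t' ∈ assignedSet mstar u, uPref u (some t') (some t) := by
      intro t ht htnot t' ht'
      obtain ⟨m', hm', hm't⟩ := ht
      haveI := hu u
      have hpref : sPref t (some u) (mstar t) := by
        rcases hpess m' hm' t with h | h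
        · rw [h] at hm't; exact absurd hm't htnot
        · rw [hm't] at h; exact h
      have hnb := hstable.2.2.2 t u
      have hnc : ¬ uPref u (some t) (some t') := fun hc => hnb ⟨hpref, Or.inr ⟨t', ht', hc⟩⟩
      have htt' : t' ≠ t := fun h => htnot (h ▸ ht')
      rcases trichotomous_of (uPref u) (some t') (some t) with h | h | h
      · exact h
      · exact absurd (Option.some_injective _ h) htt'
      · exact absurd h hnc
    refine ⟨hsub, ?_, hthird⟩
    rcases lt_or_ge (assignedSet mstar u).ncard L with hlt | hge
    · have heq : stablePartners L sPref uPref u ⊆ assignedSet mstar u := by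
        intro t ht
        by_contra htnot
        obtain ⟨m', hm', hm't⟩ := ht
        have hpref : sPref t (some u) (mstar t) := by
          rcases hpess m' hm' t with h | h
          · rw [h] at hm't; exact absurd hm't htnot
          · rw [hm't] at h; exact h
        have htacc : uPref u (some t) none := hm'.2.2.1 t u hm't
        exact hstable.2.2.2 t u ⟨hpref, Or.inl ⟨hlt, htacc⟩⟩
      have heq2 : stablePartners L sPref uPref u = assignedSet mstar u :=
        Set.Subset.antisymm heq hsub
      rw [heq2, min_eq_right (le_of_lt hlt)]
    · have hle : (assignedSet mstar u).ncard ≤ L := hstable.1 u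
      have hLeq : (assignedSet mstar u).ncard = L := le_antisymm hle hge
      have hSPge : L ≤ (stablePartners L sPref uPref u).ncard := by
        have h := Set.ncard_le_ncard hsub (Set.toFinite _)
        rwa [hLeq] at h
      rw [hLeq, min_eq_left hSPge]
  refine ⟨mstar, ⟨hstable, hprop⟩, ?_⟩
  rintro m' ⟨hm'stable, hm'prop⟩
  have hsets : ∀ u, assignedSet m' u = assignedSet mstar u := by
    intro u
    obtain ⟨hA1, hA2, hA3⟩ := hm'prop u
    obtain ⟨hB1, hB2, hB3⟩ := hprop u
    haveI := hu u
    by_contra hne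
    have hcard : (assignedSet m' u).ncard = (assignedSet mstar u).ncard := by rw [hA2, hB2]
    have hAB : ¬ assignedSet m' u ⊆ assignedSet mstar u := by
      intro hsub'
      exact hne (Set.eq_of_subset_of_ncard_le hsub' (le_of_eq hcard.symm) (Set.toFinite _))
    obtain ⟨a, haA, haB⟩ := Set.not_subset.mp hAB
    have hBA : ¬ assignedSet mstar u ⊆ assignedSet m' u := by
      intro hsub'
      exact hne ((Set.eq_of_subset_of_ncard_le hsub' (le_of_eq hcard) (Set.toFinite _)).symm)
    obtain ⟨b, hbB, hbA⟩ := Set.not_subset.mp hBA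
    have h1 : uPref u (some b) (some a) := hB3 a (hA1 haA) haB b hbB
    have h2 : uPref u (some a) (some b) := hA3 b (hB1 hbB) hbA a haA
    exact irrefl_of (uPref u) (some a) (_root_.trans_of (uPref u) h2 h1)
  funext s
  cases hms : mstar s with
  | some u =>
    have hmem : s ∈ assignedSet m' u := by
      rw [hsets u]
      exact hms
    exact hmem
  | none =>
    cases hm's : m' s with
    | none => rfl
    | some u =>
      have hmem : s ∈ assignedSet mstar u := by
        rw [← hsets u]
        exact hm's
      rw [show mstar s = some u from hmem] at hms
      exact absurd hms (by simp)
end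

section
/- In every many-to-one matching market there exists a student-optimal stable matching: a stable matching M* such that for every student s and every stable matching M, student s weakly prefers her assignment in M* to her assignment in M (where unassigned means assignment ⊥). -/
open scoped Classical
set_option linter.unusedSectionVars false
set_option linter.unusedVariables false
set_option maxHeartbeats 1000000


namespace SOSM

/-! ### Generic rank lemmas for strict total orders on finsets -/

variable {α : Type*} {r : α → α → Prop}

/-- rank of `t` in `B`: number of elements of `B` strictly `r`-above `t`. -/
noncomputable def rnk (r : α → α → Prop) (B : Finset α) (t : α) : ℕ :=
  (B.filter fun x => r x t).card

lemma rnk_lt_of_rel (hr : IsStrictTotalOrder α r) {B : Finset α} {t t' : α}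
    (ht : t ∈ B) (h : r t t') : rnk r B t < rnk r B t' := by
  haveI := hr
  have hsub : insert t (B.filter fun x => r x t) ⊆ B.filter fun x => r x t' := by
    intro x hx
    rcases Finset.mem_insert.mp hx with rfl | hx
    · exact Finset.mem_filter.mpr ⟨ht, h⟩
    · rcases Finset.mem_filter.mp hx with ⟨hxB, hxt⟩
      exact Finset.mem_filter.mpr ⟨hxB, _root_.trans hxt h⟩
  have hnm : t ∉ B.filter fun x => r x t := by
    simp [irrefl_of r t]
  calc rnk r B t < (insert t (B.filter fun x => r x t)).card := by
        rw [Finset.card_insert_of_notMem hnm]; exact Nat.lt_succ_self _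
    _ ≤ _ := Finset.card_le_card hsub

lemma rnk_injOn (hr : IsStrictTotalOrder α r) (B : Finset α) :
    Set.InjOn (rnk r B) B := by
  intro t ht t' ht' he
  by_contra hne
  rcases (show r t t' ∨ t = t' ∨ r t' t from by haveI := hr; exact trichotomous_of r t t') with h | h | h
  · exact absurd he (Nat.ne_of_lt (rnk_lt_of_rel hr ht h))
  · exact hne h
  · exact absurd he.symm (Nat.ne_of_lt (rnk_lt_of_rel hr ht' h))

lemma rnk_lt_card (hr : IsStrictTotalOrder α r) {B : Finset α} {t : α} (ht : t ∈ B) :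
    rnk r B t < B.card := by
  have hsub : (B.filter fun x => r x t) ⊆ B.erase t := by
    intro x hx
    rcases Finset.mem_filter.mp hx with ⟨hxB, hxt⟩
    refine Finset.mem_erase.mpr ⟨?_, hxB⟩
    rintro rfl; exact hr.irrefl _ hxt
  calc rnk r B t ≤ (B.erase t).card := Finset.card_le_card hsub
    _ < B.card := Finset.card_erase_lt_of_mem ht

lemma rnk_image_eq (hr : IsStrictTotalOrder α r) (B : Finset α) :
    B.image (rnk r B) = Finset.range B.card := by
  apply Finset.eq_of_subset_of_card_le
  · intro i hi
    rcases Finset.mem_image.mp hi with ⟨t, ht, rfl⟩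
    exact Finset.mem_range.mpr (rnk_lt_card hr ht)
  · rw [Finset.card_range, Finset.card_image_of_injOn (rnk_injOn hr B)]

lemma le_card_rnk_lt (hr : IsStrictTotalOrder α r) {B : Finset α} {L : ℕ} (hL : L ≤ B.card) :
    L ≤ (B.filter fun t => rnk r B t < L).card := by
  have h1 : Finset.range L ⊆ (B.filter fun t => rnk r B t < L).image (rnk r B) := by
    intro i hi
    have hiB : i ∈ B.image (rnk r B) := by
      rw [rnk_image_eq hr]
      exact Finset.mem_range.mpr (lt_of_lt_of_le (Finset.mem_range.mp hi) hL)
    rcases Finset.mem_image.mp hiB with ⟨t, ht, rfl⟩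
    exact Finset.mem_image.mpr ⟨t, Finset.mem_filter.mpr ⟨ht, Finset.mem_range.mp hi⟩, rfl⟩
  calc L = (Finset.range L).card := (Finset.card_range L).symm
    _ ≤ ((B.filter fun t => rnk r B t < L).image (rnk r B)).card := Finset.card_le_card h1
    _ ≤ _ := Finset.card_image_le

lemma exists_rnk_eq_pred (hr : IsStrictTotalOrder α r) {B : Finset α} (hB : B.Nonempty) :
    ∃ t ∈ B, rnk r B t = B.card - 1 := by
  have : B.card - 1 ∈ B.image (rnk r B) := by
    rw [rnk_image_eq hr]
    exact Finset.mem_range.mpr (by have := Finset.card_pos.mpr hB; omega)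
  rcases Finset.mem_image.mp this with ⟨t, ht, he⟩
  exact ⟨t, ht, he⟩

/-! ### Deferred acceptance -/

section DA

variable {S U : Type*} [Fintype S] [Fintype U]
variable (L : ℕ) (sPref : S → Option U → Option U → Prop)
  (uPref : U → Option S → Option S → Prop)

/-- options still available to `s` given rejection sets `R` -/
noncomputable def avail (R : S → Finset U) (s : S) : Finset (Option U) :=
  insert none ((Finset.univ.filter (fun u => u ∉ R s)).image some)

lemma avail_nonempty (R : S → Finset U) (s : S) : (avail R s).Nonempty :=
  ⟨none, Finset.mem_insert_self _ _⟩

/-- current proposal of `s`: her `sPref`-best option among available ones. -/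
noncomputable def propose (hs : ∀ s, IsStrictTotalOrder (Option U) (sPref s))
    (R : S → Finset U) (s : S) : Option U :=
  haveI := hs s
  letI : LinearOrder (Option U) := linearOrderOfSTO (sPref s)
  (avail R s).min' (avail_nonempty R s)

variable (hs : ∀ s, IsStrictTotalOrder (Option U) (sPref s))

lemma propose_mem (R : S → Finset U) (s : S) : propose sPref hs R s ∈ avail R s := by
  haveI := hs s
  letI : LinearOrder (Option U) := linearOrderOfSTO (sPref s)
  exact Finset.min'_mem _ _

lemma propose_best (R : S → Finset U) (s : S) {x : Option U} (hx : x ∈ avail R s) :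
    propose sPref hs R s = x ∨ sPref s (propose sPref hs R s) x := by
  haveI := hs s
  letI : LinearOrder (Option U) := linearOrderOfSTO (sPref s)
  exact Finset.min'_le _ x hx

lemma propose_not_rejected {R : S → Finset U} {s : S} {u : U}
    (h : propose sPref hs R s = some u) : u ∉ R s := by
  have hm := propose_mem sPref hs R s
  rw [h] at hm
  rcases Finset.mem_insert.mp hm with h' | h'
  · exact absurd h' (Option.some_ne_none u)
  · rcases Finset.mem_image.mp h' with ⟨v, hv, he⟩
    cases Option.some_injective _ he
    exact (Finset.mem_filter.mp hv).2

lemma propose_congr {R R' : S → Finset U} {s : S} (h : R s = R' s) :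
    propose sPref hs R s = propose sPref hs R' s := by
  unfold propose avail
  congr 1
  rw [h]

/-- students currently proposing to `u` -/
noncomputable def proposers (R : S → Finset U) (u : U) : Finset S :=
  Finset.univ.filter (fun s => propose sPref hs R s = some u)

/-- acceptable students currently proposing to `u` -/
noncomputable def accProp (R : S → Finset U) (u : U) : Finset S :=
  (proposers sPref hs R u).filter (fun s => uPref u (some s) none)

/-- acceptable proposers to `u` strictly better than `s` -/
noncomputable def better (R : S → Finset U) (u : U) (s : S) : Finset S :=
  (accProp sPref uPref hs R u).filter (fun t => uPref u (some t) (some s))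

/-- `u` rejects `s` at state `R` -/
def rejects (R : S → Finset U) (s : S) (u : U) : Prop :=
  propose sPref hs R s = some u ∧
    (uPref u none (some s) ∨ L ≤ (better sPref uPref hs R u s).card)

/-- one round of deferred acceptance: add all new rejections -/
noncomputable def step (R : S → Finset U) : S → Finset U :=
  fun s => R s ∪ Finset.univ.filter (fun u => rejects L sPref uPref hs R s u)

lemma subset_step (R : S → Finset U) (s : S) : R s ⊆ step L sPref uPref hs R s :=
  Finset.subset_union_left

lemma mem_step_iff {R : S → Finset U} {s : S} {u : U} :
    u ∈ step L sPref uPref hs R s ↔ u ∈ R s ∨ rejects L sPref uPref hs R s u := by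
  simp [step]

/-- the university preference relation restricted to `some` values is a strict total order -/
lemma sto_some (hu : ∀ u, IsStrictTotalOrder (Option S) (uPref u)) (u : U) :
    IsStrictTotalOrder S (fun a b => uPref u (some a) (some b)) := by
  haveI := hu u
  haveI h1 : IsTrichotomous S (fun a b => uPref u (some a) (some b)) := by
    constructor
    intro a b hab hba
    rcases trichotomous_of (uPref u) (some a) (some b) with h | h | h
    · exact absurd h hab
    · exact Option.some_injective _ h
    · exact absurd h hba
  haveI h2 : IsIrrefl S (fun a b => uPref u (some a) (some b)) :=
    ⟨fun a h => irrefl_of (uPref u) _ h⟩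
  haveI h3 : IsTrans S (fun a b => uPref u (some a) (some b)) :=
    ⟨fun a b c hab hbc => trans_of (uPref u) hab hbc⟩
  exact { }

lemma better_eq_rnk (R : S → Finset U) (u : U) (t : S) :
    (better sPref uPref hs R u t).card
      = rnk (fun a b => uPref u (some a) (some b)) (accProp sPref uPref hs R u) t := rfl

/-- a currently held (acceptable, low-rank) proposer is not rejected, and keeps proposing. -/
lemma propose_step_eq (hu : ∀ u, IsStrictTotalOrder (Option S) (uPref u))
    (R : S → Finset U) {t : S} {u : U}
    (hp : propose sPref hs R t = some u) (hacc : uPref u (some t) none)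
    (hrk : (better sPref uPref hs R u t).card < L) :
    propose sPref hs (step L sPref uPref hs R) t = propose sPref hs R t := by
  haveI := hu u
  apply (propose_congr sPref hs ?_).symm
  show R t = step L sPref uPref hs R t
  unfold step
  have : Finset.univ.filter (fun u' => rejects L sPref uPref hs R t u') = ∅ := by
    apply Finset.filter_false_of_mem
    intro u' _ hrej
    obtain ⟨hp', hc⟩ := hrej
    rw [hp] at hp'
    cases Option.some_injective _ hp'.symm
    rcases hc with h | h
    · exact irrefl_of (uPref u) _ (trans_of (uPref u) hacc h)
    · omega
  rw [this, Finset.union_empty]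

/-- key survival lemma: the "better-than-s" count never drops below `L` once it reached `L`. -/
lemma better_step_mono (hu : ∀ u, IsStrictTotalOrder (Option S) (uPref u))
    (R : S → Finset U) {u : U} {s : S}
    (h : L ≤ (better sPref uPref hs R u s).card) :
    L ≤ (better sPref uPref hs (step L sPref uPref hs R) u s).card := by
  haveI := hu u
  set r' : S → S → Prop := fun a b => uPref u (some a) (some b) with hr'
  set B : Finset S := accProp sPref uPref hs R u with hB
  have hsto := sto_some uPref hu u
  have hLB : L ≤ B.card := le_trans h (Finset.card_le_card (Finset.filter_subset _ _))
  set W : Finset S := B.filter (fun t => rnk r' B t < L) with hW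
  have hWcard : L ≤ W.card := le_card_rnk_lt hsto hLB
  have hWsub : W ⊆ better sPref uPref hs (step L sPref uPref hs R) u s := by
    intro t htW
    obtain ⟨htB, htrk⟩ := Finset.mem_filter.mp htW
    obtain ⟨htP, htacc⟩ := Finset.mem_filter.mp htB
    have htp : propose sPref hs R t = some u := (Finset.mem_filter.mp htP).2
    have hbt : (better sPref uPref hs R u t).card < L := by
      rw [better_eq_rnk]; exact htrk
    have hkeep := propose_step_eq L sPref uPref hs hu R htp htacc hbt
    have hts : uPref u (some t) (some s) := by
      rcases trichotomous_of (uPref u) (some t) (some s) with h' | h' | h'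
      · exact h'
      · cases Option.some_injective _ h'
        omega
      · exfalso
        have hsub2 : better sPref uPref hs R u s ⊆ better sPref uPref hs R u t := by
          intro x hx
          obtain ⟨hxB, hxs⟩ := Finset.mem_filter.mp hx
          exact Finset.mem_filter.mpr ⟨hxB, trans_of (uPref u) hxs h'⟩
        have := le_trans h (Finset.card_le_card hsub2)
        omega
    refine Finset.mem_filter.mpr ⟨Finset.mem_filter.mpr ⟨?_, htacc⟩, hts⟩
    exact Finset.mem_filter.mpr ⟨Finset.mem_univ _, by rw [hkeep]; exact htp⟩
  exact le_trans hWcard (Finset.card_le_card hWsub)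

/-- stage invariant J: every rejection is justified. -/
def Jinv (R : S → Finset U) : Prop :=
  ∀ s u, u ∈ R s → uPref u none (some s) ∨ L ≤ (better sPref uPref hs R u s).card

lemma Jinv_step (hu : ∀ u, IsStrictTotalOrder (Option S) (uPref u))
    {R : S → Finset U} (hJ : Jinv L sPref uPref hs R) :
    Jinv L sPref uPref hs (step L sPref uPref hs R) := by
  intro s u hmem
  have key : uPref u none (some s) ∨ L ≤ (better sPref uPref hs R u s).card := by
    rcases (mem_step_iff L sPref uPref hs).mp hmem with h | h
    · exact hJ s u h
    · exact h.2
  rcases key with h | h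
  · exact Or.inl h
  · exact Or.inr (better_step_mono L sPref uPref hs hu R h)

/-- stage invariant I: no stable matching assigns a student to a university that rejected her. -/
def Iinv (R : S → Finset U) : Prop :=
  ∀ m' : S → Option U, IsStableMatching L sPref uPref m' →
    ∀ s u, u ∈ R s → m' s ≠ some u

lemma weak_pref {R : S → Finset U} (hI : Iinv L sPref uPref R)
    {m' : S → Option U} (hm' : IsStableMatching L sPref uPref m') (s : S) :
    propose sPref hs R s = m' s ∨ sPref s (propose sPref hs R s) (m' s) := by
  apply propose_best
  cases hms : m' s with
  | none => exact Finset.mem_insert_self _ _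
  | some u =>
    refine Finset.mem_insert_of_mem (Finset.mem_image.mpr ⟨u, ?_, rfl⟩)
    refine Finset.mem_filter.mpr ⟨Finset.mem_univ _, ?_⟩
    intro hmem
    exact hI m' hm' s u hmem hms

lemma Iinv_step (hu : ∀ u, IsStrictTotalOrder (Option S) (uPref u))
    {R : S → Finset U} (hI : Iinv L sPref uPref R) :
    Iinv L sPref uPref (step L sPref uPref hs R) := by
  intro M hM s u hmem hMs
  haveI := hu u
  rcases (mem_step_iff L sPref uPref hs).mp hmem with h | h
  · exact hI M hM s u h hMs
  obtain ⟨hp, hc⟩ := h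
  rcases hc with hunacc | hTL
  · exact irrefl_of (uPref u) _ (trans_of (uPref u) hunacc (hM.2.2.1 s u hMs))
  · set T : Finset S := better sPref uPref hs R u s with hT
    set AM : Finset S := Finset.univ.filter (fun t => M t = some u) with hAM
    have hAMcard : AM.card ≤ L := by
      have h1 := hM.1 u
      have h2 : assignedSet M u = ↑AM := by
        ext t; simp [assignedSet, hAM]
      rw [h2, Set.ncard_coe_finset] at h1
      exact h1
    have hsT : s ∉ T := by
      intro hsT
      exact irrefl_of (uPref u) _ (Finset.mem_filter.mp hsT).2
    set T' : Finset S := T.filter (fun t => M t = some u) with hT'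
    have hT'sub : insert s T' ⊆ AM := by
      intro x hx
      rcases Finset.mem_insert.mp hx with rfl | hx
      · exact Finset.mem_filter.mpr ⟨Finset.mem_univ _, hMs⟩
      · exact Finset.mem_filter.mpr ⟨Finset.mem_univ _, (Finset.mem_filter.mp hx).2⟩
    have hsT' : s ∉ T' := fun hx => hsT (Finset.mem_filter.mp hx).1
    have hT'card : T'.card + 1 ≤ L := by
      have := Finset.card_le_card hT'sub
      rw [Finset.card_insert_of_notMem hsT'] at this
      omega
    have : ∃ t ∈ T, M t ≠ some u := by
      by_contra hcon
      push_neg at hcon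
      have : T' = T := Finset.filter_eq_self.mpr hcon
      have := Finset.card_le_card (Finset.filter_subset (fun t => M t = some u) T)
      rw [‹T' = T›] at hT'card
      omega
    obtain ⟨t, htT, htne⟩ := this
    obtain ⟨htB, hts⟩ := Finset.mem_filter.mp htT
    have htp : propose sPref hs R t = some u :=
      (Finset.mem_filter.mp (Finset.mem_filter.mp htB).1).2
    have hwp := weak_pref L sPref uPref hs hI hM t
    rw [htp] at hwp
    have hstrict : sPref t (some u) (M t) := hwp.resolve_left (fun he => htne he.symm)
    exact hM.2.2.2 t u ⟨hstrict, Or.inr ⟨s, hMs, hts⟩⟩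

/-! ### Iteration to a fixed point -/

/-- the `n`-th state of the algorithm -/
noncomputable def Rn (n : ℕ) : S → Finset U := (step L sPref uPref hs)^[n] (fun _ => ∅)

lemma Rn_succ (n : ℕ) :
    Rn L sPref uPref hs (n + 1) = step L sPref uPref hs (Rn L sPref uPref hs n) :=
  Function.iterate_succ_apply' _ n _

lemma exists_fix : ∃ n,
    step L sPref uPref hs (Rn L sPref uPref hs n) = Rn L sPref uPref hs n := by
  by_contra h
  push_neg at h
  have key : ∀ n, n ≤ ∑ s, ((Rn L sPref uPref hs n) s).card := by
    intro n
    induction n with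
    | zero => exact Nat.zero_le _
    | succ n ih =>
      have hne := h n
      have hstep : ∀ s : S, Rn L sPref uPref hs n s ⊆ Rn L sPref uPref hs (n + 1) s := by
        intro s; rw [Rn_succ]; exact subset_step _ _ _ _ _ s
      have hex : ∃ s : S, Rn L sPref uPref hs n s ≠ Rn L sPref uPref hs (n + 1) s := by
        by_contra hc
        push_neg at hc
        apply hne
        rw [← Rn_succ L sPref uPref hs n]
        funext s
        exact (hc s).symm
      obtain ⟨s0, hs0⟩ := hex
      have hlt : ∑ s, ((Rn L sPref uPref hs n) s).card
          < ∑ s, ((Rn L sPref uPref hs (n + 1)) s).card := by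
        apply Finset.sum_lt_sum
        · intro i _; exact Finset.card_le_card (hstep i)
        · exact ⟨s0, Finset.mem_univ _,
            Finset.card_lt_card (HasSubset.Subset.ssubset_of_ne (hstep s0) hs0)⟩
      omega
  have hb : ∀ n, ∑ s, ((Rn L sPref uPref hs n) s).card
      ≤ Fintype.card S * Fintype.card U := by
    intro n
    calc ∑ s, ((Rn L sPref uPref hs n) s).card ≤ ∑ _s : S, Fintype.card U :=
          Finset.sum_le_sum (fun s _ => Finset.card_le_univ _)
      _ = Fintype.card S * Fintype.card U := by
          rw [Finset.sum_const, Finset.card_univ, smul_eq_mul]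
  have h1 := key (Fintype.card S * Fintype.card U + 1)
  have h2 := hb (Fintype.card S * Fintype.card U + 1)
  omega

lemma Jinv_Rn (hu : ∀ u, IsStrictTotalOrder (Option S) (uPref u)) (n : ℕ) :
    Jinv L sPref uPref hs (Rn L sPref uPref hs n) := by
  induction n with
  | zero =>
    intro s u hmem
    simp [Rn] at hmem
  | succ n ih =>
    rw [Rn_succ]
    exact Jinv_step L sPref uPref hs hu ih

lemma Iinv_Rn (hu : ∀ u, IsStrictTotalOrder (Option S) (uPref u)) (n : ℕ) :
    Iinv L sPref uPref (Rn L sPref uPref hs n) := by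
  induction n with
  | zero =>
    intro M hM s u hmem
    simp [Rn] at hmem
  | succ n ih =>
    rw [Rn_succ]
    exact Iinv_step L sPref uPref hs hu ih

/-! ### Properties at a fixed point -/

lemma fp_not_reject (hu : ∀ u, IsStrictTotalOrder (Option S) (uPref u))
    {R : S → Finset U} (hfix : step L sPref uPref hs R = R) {s : S} {u : U}
    (hp : propose sPref hs R s = some u) :
    uPref u (some s) none ∧ (better sPref uPref hs R u s).card < L := by
  haveI := hu u
  have hnr : ¬ rejects L sPref uPref hs R s u := by
    intro hr
    have hmem : u ∈ step L sPref uPref hs R s := (mem_step_iff L sPref uPref hs).mpr (Or.inr hr)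
    rw [hfix] at hmem
    exact propose_not_rejected sPref hs hp hmem
  have hc : ¬ (uPref u none (some s) ∨ L ≤ (better sPref uPref hs R u s).card) :=
    fun hx => hnr ⟨hp, hx⟩
  push_neg at hc
  obtain ⟨h1, h2⟩ := hc
  refine ⟨?_, by omega⟩
  rcases trichotomous_of (uPref u) (some s) none with h | h | h
  · exact h
  · exact absurd h (Option.some_ne_none s)
  · exact absurd h h1

lemma fp_card_le (hu : ∀ u, IsStrictTotalOrder (Option S) (uPref u))
    {R : S → Finset U} (hfix : step L sPref uPref hs R = R) (u : U) :
    (proposers sPref hs R u).card ≤ L := by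
  by_contra hcon
  push_neg at hcon
  have heqB : accProp sPref uPref hs R u = proposers sPref hs R u := by
    apply Finset.filter_eq_self.mpr
    intro s hsP
    exact (fp_not_reject L sPref uPref hs hu hfix (Finset.mem_filter.mp hsP).2).1
  have hne : (accProp sPref uPref hs R u).Nonempty := by
    rw [heqB]
    exact Finset.card_pos.mp (by omega)
  obtain ⟨t, htB, hrk⟩ := exists_rnk_eq_pred (sto_some uPref hu u) hne
  have htp : propose sPref hs R t = some u :=
    (Finset.mem_filter.mp (Finset.mem_filter.mp htB).1).2
  have hlow := (fp_not_reject L sPref uPref hs hu hfix htp).2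
  rw [better_eq_rnk, hrk] at hlow
  have hBcard : (accProp sPref uPref hs R u).card = (proposers sPref hs R u).card := by
    rw [heqB]
  omega

end DA
end SOSM

/-- There exists a student-optimal stable matching: a stable matching `m*` such that
every student weakly prefers her assignment under `m*` to her assignment under any
other stable matching. -/
theorem exists_student_optimal_stable_matching
    {S U : Type*} [Fintype S] [Fintype U]
    (L : ℕ) (hL : 1 ≤ L)
    (sPref : S → Option U → Option U → Prop) (uPref : U → Option S → Option S → Prop)
    (hs : ∀ s, IsStrictTotalOrder (Option U) (sPref s))
    (hu : ∀ u, IsStrictTotalOrder (Option S) (uPref u)) :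
    ∃ m : S → Option U, IsStableMatching L sPref uPref m ∧
      ∀ m' : S → Option U, IsStableMatching L sPref uPref m' →
        ∀ s : S, m s = m' s ∨ sPref s (m s) (m' s) := by

  classical
  open SOSM in
  obtain ⟨n, hfix⟩ := SOSM.exists_fix L sPref uPref hs
  set R : S → Finset U := SOSM.Rn L sPref uPref hs n with hRdef
  have hJ : SOSM.Jinv L sPref uPref hs R := SOSM.Jinv_Rn L sPref uPref hs hu n
  have hI : SOSM.Iinv L sPref uPref R := SOSM.Iinv_Rn L sPref uPref hs hu n
  refine ⟨SOSM.propose sPref hs R, ⟨?_, ?_, ?_, ?_⟩, ?_⟩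
  · -- IsMatching
    intro u
    have hset : assignedSet (SOSM.propose sPref hs R) u = ↑(SOSM.proposers sPref hs R u) := by
      ext t; simp [assignedSet, SOSM.proposers]
    rw [hset, Set.ncard_coe_finset]
    exact SOSM.fp_card_le L sPref uPref hs hu hfix u
  · -- matched students prefer their university to none
    intro s u hsu
    have hmem : (none : Option U) ∈ SOSM.avail R s := Finset.mem_insert_self _ _
    have := SOSM.propose_best sPref hs R s hmem
    rw [hsu] at this
    rcases this with h | h
    · exact absurd h (Option.some_ne_none u)
    · exact h
  · -- universities prefer their students to none
    intro s u hsu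
    exact (SOSM.fp_not_reject L sPref uPref hs hu hfix hsu).1
  · -- no blocking pair
    intro s u hblock
    obtain ⟨h1, h2⟩ := hblock
    haveI := hu u
    haveI := hs s
    by_cases hmem : u ∈ R s
    · rcases hJ s u hmem with hunacc | hTL
      · rcases h2 with ⟨_, hacc⟩ | ⟨t, hmt, hst⟩
        · exact irrefl_of (uPref u) _ (trans_of (uPref u) hunacc hacc)
        · have htp : SOSM.propose sPref hs R t = some u := hmt
          have hta := (SOSM.fp_not_reject L sPref uPref hs hu hfix htp).1
          exact irrefl_of (uPref u) _
            (trans_of (uPref u) (trans_of (uPref u) hunacc hst) hta)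
      · have hsubP : SOSM.better sPref uPref hs R u s ⊆ SOSM.proposers sPref hs R u := by
          intro x hx
          exact (Finset.mem_filter.mp (Finset.mem_filter.mp hx).1).1
        have hcard := SOSM.fp_card_le L sPref uPref hs hu hfix u
        have heq : SOSM.better sPref uPref hs R u s = SOSM.proposers sPref hs R u :=
          Finset.eq_of_subset_of_card_le hsubP (le_trans hcard hTL)
        rcases h2 with ⟨hlt, _⟩ | ⟨t, hmt, hst⟩
        · have hset : assignedSet (SOSM.propose sPref hs R) u
              = ↑(SOSM.proposers sPref hs R u) := by
            ext t; simp [assignedSet, SOSM.proposers]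
          rw [hset, Set.ncard_coe_finset, ← heq] at hlt
          omega
        · have htP : t ∈ SOSM.proposers sPref hs R u :=
            Finset.mem_filter.mpr ⟨Finset.mem_univ _, hmt⟩
          rw [← heq] at htP
          have hts := (Finset.mem_filter.mp htP).2
          exact irrefl_of (uPref u) _ (trans_of (uPref u) hst hts)
    · have hmemav : some u ∈ SOSM.avail R s :=
        Finset.mem_insert_of_mem (Finset.mem_image.mpr
          ⟨u, Finset.mem_filter.mpr ⟨Finset.mem_univ _, hmem⟩, rfl⟩)
      rcases SOSM.propose_best sPref hs R s hmemav with he | hlt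
      · rw [he] at h1
        exact irrefl_of (sPref s) _ h1
      · exact irrefl_of (sPref s) _ (trans_of (sPref s) h1 hlt)
  · -- optimality
    intro m' hm' s
    exact SOSM.weak_pref L sPref uPref hs hI hm' s
end

section
/- In a many-to-one matching market, if a student is unmatched (assigned ⊥) in some stable matching, then she is unmatched in every stable matching. -/
/-- If a student is unmatched (assigned `⊥`) in some stable matching, then she is
unmatched in every stable matching. -/
theorem unmatched_in_all_stable_matchings
    {S U : Type*} [Fintype S] [Fintype U]
    (L : ℕ) (hL : 1 ≤ L)
    (sPref : S → Option U → Option U → Prop) (uPref : U → Option S → Option S → Prop)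
    (hs : ∀ s, IsStrictTotalOrder (Option U) (sPref s))
    (hu : ∀ u, IsStrictTotalOrder (Option S) (uPref u))
    (s : S) (m m' : S → Option U)
    (hm : IsStableMatching L sPref uPref m) (hm' : IsStableMatching L sPref uPref m')
    (h : m s = none) :
    m' s = none := by
  classical
  by_contra hne
  obtain ⟨u₀, hu₀⟩ : ∃ u, m' s = some u := by
    cases hms : m' s with
    | none => exact absurd hms hne
    | some u => exact ⟨u, rfl⟩
  obtain ⟨hM, hIRs, hIRu, hNB⟩ := hm
  obtain ⟨hM', hIRs', hIRu', hNB'⟩ := hm'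
  set A : U → Finset S := fun u => Finset.univ.filter (fun t => m t = some u) with hA
  set A' : U → Finset S := fun u => Finset.univ.filter (fun t => m' t = some u) with hA'
  have hAncard : ∀ u, (assignedSet m u).ncard = (A u).card := by
    intro u
    have hco : assignedSet m u = ↑(A u) := by
      ext t; simp [assignedSet, hA]
    rw [hco, Set.ncard_coe_finset]
  have hAncard' : ∀ u, (assignedSet m' u).ncard = (A' u).card := by
    intro u
    have hco : assignedSet m' u = ↑(A' u) := by
      ext t; simp [assignedSet, hA']
    rw [hco, Set.ncard_coe_finset]
  set B : Finset S := Finset.univ.filter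
    (fun t => ∃ u, m' t = some u ∧ (m t = none ∨ sPref t (some u) (m t))) with hB
  have hsB : s ∈ B := by
    simp only [hB, Finset.mem_filter, Finset.mem_univ, true_and]
    exact ⟨u₀, hu₀, Or.inl h⟩
  -- Key lemma 1
  have L1 : ∀ t ∈ B, ∀ u, m' t = some u →
      (A u).card = L ∧ ∀ r, m r = some u → uPref u (some r) (some t) := by
    intro t ht u htu
    have htB : m t = none ∨ sPref t (some u) (m t) := by
      simp only [hB, Finset.mem_filter, Finset.mem_univ, true_and] at ht
      obtain ⟨u', h1, h2⟩ := ht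
      rw [htu] at h1
      injection h1 with h1
      rwa [← h1] at h2
    have hA1 : sPref t (some u) (m t) := by
      rcases htB with h1 | h1
      · rw [h1]; exact hIRs' t u htu
      · exact h1
    have h2 : ¬(((assignedSet m u).ncard < L ∧ uPref u (some t) none) ∨
        ∃ r, m r = some u ∧ uPref u (some t) (some r)) :=
      fun hc => hNB t u ⟨hA1, hc⟩
    constructor
    · have hIR : uPref u (some t) none := hIRu' t u htu
      have hnlt : ¬ (assignedSet m u).ncard < L := fun hlt => h2 (Or.inl ⟨hlt, hIR⟩)
      have hle := hM u
      rw [hAncard] at hnlt hle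
      omega
    · intro r hr
      have hnotr : ¬ uPref u (some t) (some r) := fun hp => h2 (Or.inr ⟨r, hr, hp⟩)
      have htr : t ≠ r := by
        rintro rfl
        rw [hr] at hA1
        exact haveI := hs t; irrefl _ hA1
      haveI := hu u
      rcases trichotomous_of (uPref u) (some r) (some t) with h3 | h3 | h3
      · exact h3
      · exact absurd (Option.some_injective _ h3).symm htr
      · exact absurd h3 hnotr
  set V : Finset U := Finset.univ.filter (fun u => ∃ t ∈ B, m' t = some u) with hV
  -- Key lemma 2
  have L2 : ∀ u ∈ V, ∀ r ∈ A u \ A' u, r ∈ B ∧ r ≠ s := by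
    intro u huV r hrmem
    simp only [Finset.mem_sdiff, hA, hA', Finset.mem_filter, Finset.mem_univ, true_and] at hrmem
    obtain ⟨hr, hr'⟩ := hrmem
    simp only [hV, Finset.mem_filter, Finset.mem_univ, true_and] at huV
    obtain ⟨t, ht, htu⟩ := huV
    have hpref : uPref u (some r) (some t) := (L1 t ht u htu).2 r hr
    have hIRr : sPref r (some u) none := hIRs r u hr
    have hrs : r ≠ s := by
      rintro rfl
      rw [h] at hr
      cases hr
    refine ⟨?_, hrs⟩
    cases hmr : m' r with
    | none =>
      exact absurd ⟨by rw [hmr]; exact hIRr, Or.inr ⟨t, htu, hpref⟩⟩ (hNB' r u)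
    | some u'' =>
      have hne2 : u'' ≠ u := by
        rintro rfl
        exact hr' hmr
      have hns : ¬ sPref r (some u) (m' r) :=
        fun hp => hNB' r u ⟨hp, Or.inr ⟨t, htu, hpref⟩⟩
      rw [hmr] at hns
      haveI := hs r
      rcases trichotomous_of (sPref r) (some u) (some u'') with h3 | h3 | h3
      · exact absurd h3 hns
      · exact absurd (Option.some_injective _ h3) (Ne.symm hne2)
      · simp only [hB, Finset.mem_filter, Finset.mem_univ, true_and]
        exact ⟨u'', hmr, Or.inr (by rw [hr]; exact h3)⟩
  -- Counting
  have hBsub : B ⊆ V.biUnion (fun u => B ∩ A' u) := by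
    intro t ht
    have ht' := ht
    simp only [hB, Finset.mem_filter, Finset.mem_univ, true_and] at ht'
    obtain ⟨u, htu, _⟩ := ht'
    refine Finset.mem_biUnion.2 ⟨u, ?_, ?_⟩
    · simp only [hV, Finset.mem_filter, Finset.mem_univ, true_and]
      exact ⟨t, ht, htu⟩
    · simp only [Finset.mem_inter, hA', Finset.mem_filter, Finset.mem_univ, true_and]
      exact ⟨ht, htu⟩
  have hcard1 : B.card ≤ ∑ u ∈ V, (B ∩ A' u).card :=
    le_trans (Finset.card_le_card hBsub) (Finset.card_biUnion_le)
  have hper : ∀ u ∈ V, (B ∩ A' u).card ≤ (A u \ A' u).card := by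
    intro u huV
    simp only [hV, Finset.mem_filter, Finset.mem_univ, true_and] at huV
    obtain ⟨t, ht, htu⟩ := huV
    have hfull : (A u).card = L := (L1 t ht u htu).1
    have hle' : (A' u).card ≤ L := by
      have := hM' u; rwa [hAncard'] at this
    have hsub : B ∩ A' u ⊆ A' u \ A u := by
      intro x hx
      simp only [Finset.mem_inter, hB, hA, hA', Finset.mem_filter, Finset.mem_univ,
        true_and] at hx
      obtain ⟨⟨u', hxu', hxd⟩, hxA'⟩ := hx
      rw [hxA'] at hxu'
      injection hxu' with hxu'
      rw [← hxu'] at hxd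
      simp only [Finset.mem_sdiff, hA, hA', Finset.mem_filter, Finset.mem_univ, true_and]
      refine ⟨hxA', fun hxm => ?_⟩
      rcases hxd with h1 | h1
      · rw [h1] at hxm; cases hxm
      · rw [hxm] at h1
        exact haveI := hs x; irrefl _ h1
    have h1 := Finset.card_sdiff_add_card_inter (A' u) (A u)
    have h2 := Finset.card_sdiff_add_card_inter (A u) (A' u)
    have h3 : (A' u ∩ A u).card = (A u ∩ A' u).card := by rw [Finset.inter_comm]
    have h4 := Finset.card_le_card hsub
    omega
  have hdisj : ∀ u ∈ V, ∀ v ∈ V, u ≠ v →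
      Disjoint (A u \ A' u) (A v \ A' v) := by
    intro u _ v _ huv
    rw [Finset.disjoint_left]
    intro x hx hx'
    simp only [Finset.mem_sdiff, hA, hA', Finset.mem_filter, Finset.mem_univ, true_and] at hx hx'
    rw [hx.1] at hx'
    exact huv (Option.some_injective _ hx'.1)
  have hsum : ∑ u ∈ V, (A u \ A' u).card = (V.biUnion (fun u => A u \ A' u)).card :=
    (Finset.card_biUnion hdisj).symm
  have hsub2 : V.biUnion (fun u => A u \ A' u) ⊆ B.erase s := by
    intro x hx
    obtain ⟨u, huV, hxu⟩ := Finset.mem_biUnion.1 hx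
    obtain ⟨hxB, hxs⟩ := L2 u huV x hxu
    exact Finset.mem_erase.2 ⟨hxs, hxB⟩
  have hfin : (B.erase s).card = B.card - 1 := Finset.card_erase_of_mem hsB
  have hpos : 1 ≤ B.card := Finset.card_pos.2 ⟨s, hsB⟩
  have hchain : B.card ≤ (B.erase s).card := by
    calc B.card ≤ ∑ u ∈ V, (B ∩ A' u).card := hcard1
    _ ≤ ∑ u ∈ V, (A u \ A' u).card := Finset.sum_le_sum hper
    _ = (V.biUnion (fun u => A u \ A' u)).card := hsum
    _ ≤ (B.erase s).card := Finset.card_le_card hsub2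
  omega
end

section
/- In a many-to-one matching market, if a university u has at most L stable partners (|S(u)| ≤ L), then in every stable matching u is assigned exactly the set S(u). -/
lemma exists_injOn_mapsTo {α : Type*} [Fintype α] {A B : Set α} (h : A.ncard ≤ B.ncard) :
    ∃ g : α → α, Set.InjOn g A ∧ Set.MapsTo g A B := by
  classical
  have hA : Fintype.card A ≤ Fintype.card B := by
    rwa [← Nat.card_coe_set_eq, ← Nat.card_coe_set_eq, Nat.card_eq_fintype_card,
      Nat.card_eq_fintype_card] at h
  obtain ⟨e⟩ := Function.Embedding.nonempty_of_card_le hA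
  refine ⟨fun s => if hs : s ∈ A then (e ⟨s, hs⟩ : α) else s, ?_, ?_⟩
  · intro a ha b hb hab
    simp only [dif_pos ha, dif_pos hb] at hab
    have := e.injective (Subtype.coe_injective hab)
    exact Subtype.ext_iff.mp this
  · intro a ha
    show (if hs : a ∈ A then (e ⟨a, hs⟩ : α) else a) ∈ B
    rw [dif_pos ha]
    exact (e ⟨a, ha⟩).2


/-- If a university `u` has at most `L` stable partners, then in every stable matching
`u` is assigned exactly the set `S(u)` of its stable partners. -/
theorem assigned_eq_stablePartners_of_card_le
    {S U : Type*} [Fintype S] [Fintype U]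
    (L : ℕ) (hL : 1 ≤ L)
    (sPref : S → Option U → Option U → Prop) (uPref : U → Option S → Option S → Prop)
    (hs : ∀ s, IsStrictTotalOrder (Option U) (sPref s))
    (hu : ∀ u, IsStrictTotalOrder (Option S) (uPref u))
    (u : U) (hcard : (stablePartners L sPref uPref u).ncard ≤ L)
    (m : S → Option U) (hm : IsStableMatching L sPref uPref m) :
    assignedSet m u = stablePartners L sPref uPref u := by
  classical
  have hm1 := hm.1
  have hm2 := hm.2.1
  have hm3 := hm.2.2.1
  have hm4 := hm.2.2.2
  apply Set.Subset.antisymm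
  · intro s hsm
    exact ⟨m, hm, hsm⟩
  intro s0 hs0
  obtain ⟨m', hm', hs0u⟩ := hs0
  have hm'1 := hm'.1
  have hm'2 := hm'.2.1
  have hm'3 := hm'.2.2.1
  have hm'4 := hm'.2.2.2
  show m s0 = some u
  by_contra h0
  -- `u` is underfilled in `m`
  have hsubm : assignedSet m u ⊆ stablePartners L sPref uPref u := fun t ht => ⟨m, hm, ht⟩
  have hsubm' : assignedSet m' u ⊆ stablePartners L sPref uPref u := fun t ht => ⟨m', hm', ht⟩
  have hunder : (assignedSet m u).ncard < L := by
    have hss : assignedSet m u ⊂ stablePartners L sPref uPref u :=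
      (Set.ssubset_iff_of_subset hsubm).mpr ⟨s0, ⟨m', hm', hs0u⟩, h0⟩
    exact lt_of_lt_of_le (Set.ncard_lt_ncard hss (Set.toFinite _)) hcard
  -- Key stability consequence in m' : if a student s matched to w in m prefers w
  -- over her m'-partner v, then w is full in m' and w prefers all its m'-students to s.
  have key : ∀ s v w, m' s = some v → m s = some w → sPref s (some w) (some v) →
      (assignedSet m' w).ncard = L ∧ ∀ t, m' t = some w → uPref w (some t) (some s) := by
    intro s v w hv hw hpref
    have hnb := hm'4 s w
    rw [IsBlockingPair, hv] at hnb
    have hnd : ¬ (((assignedSet m' w).ncard < L ∧ uPref w (some s) none) ∨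
        ∃ t : S, m' t = some w ∧ uPref w (some s) (some t)) := fun d => hnb ⟨hpref, d⟩
    have hw0 : uPref w (some s) none := hm3 s w hw
    have hnlt : ¬ (assignedSet m' w).ncard < L := fun h => hnd (Or.inl ⟨h, hw0⟩)
    refine ⟨le_antisymm (hm'1 w) (not_lt.mp hnlt), ?_⟩
    intro t ht
    have hne : t ≠ s := by
      rintro rfl
      rw [hv] at ht
      obtain rfl : v = w := Option.some_injective _ ht
      exact absurd hpref (irrefl_of (sPref t) _)
    have hnts : ¬ uPref w (some s) (some t) := fun h => hnd (Or.inr ⟨t, ht, h⟩)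
    haveI := hu w
    rcases trichotomous_of (uPref w) (some t) (some s) with h | h | h
    · exact h
    · exact absurd (Option.some_injective _ h) hne
    · exact absurd h hnts
  -- If a student in this situation has m-partner equal to u, contradiction
  have claimC : ∀ s v, m' s = some v → m s = some u → sPref s (some u) (some v) → False := by
    intro s v hv hwu hpref
    have hcardu : (assignedSet m' u).ncard = L := (key s v u hv hwu hpref).1
    have heq : assignedSet m' u = stablePartners L sPref uPref u :=
      Set.eq_of_subset_of_ncard_le hsubm' (le_trans hcard hcardu.ge) (Set.toFinite _)
    have hsmem : s ∈ stablePartners L sPref uPref u := ⟨m, hm, hwu⟩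
    rw [← heq] at hsmem
    have hsmem2 : m' s = some u := hsmem
    obtain rfl : v = u := Option.some_injective _ (hv.symm.trans hsmem2)
    exact absurd hpref (irrefl_of (sPref s) _)
  -- step: the next student in the chain also prefers her m-partner
  have step : ∀ s v w t, m' s = some v → m s = some w → sPref s (some w) (some v) →
      m' t = some w → m t ≠ some w →
      ∃ x, m t = some x ∧ sPref t (some x) (some w) := by
    intro s v w t hv hw hpref ht htn
    have hts : uPref w (some t) (some s) := (key s v w hv hw hpref).2 t ht
    have hnb := hm4 t w
    rw [IsBlockingPair] at hnb
    have hnpref : ¬ sPref t (some w) (m t) := fun h => hnb ⟨h, Or.inr ⟨s, hw, hts⟩⟩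
    have htw0 : sPref t (some w) none := hm'2 t w ht
    cases hx : m t with
    | none => rw [hx] at hnpref; exact absurd htw0 hnpref
    | some x =>
      refine ⟨x, rfl, ?_⟩
      rw [hx] at hnpref
      have hxw : (some x : Option U) ≠ some w := fun h => htn (hx.trans h)
      haveI := hs t
      rcases trichotomous_of (sPref t) (some x) (some w) with h | h | h
      · exact h
      · exact absurd h hxw
      · exact absurd h hnpref
  -- injections from (m-students of w not m'-students) into (m'-students of w not m-students)
  have hgex : ∀ w, ∃ gw : S → S, (assignedSet m' w).ncard = L →
      Set.InjOn gw (assignedSet m w \ assignedSet m' w) ∧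
      Set.MapsTo gw (assignedSet m w \ assignedSet m' w)
        (assignedSet m' w \ assignedSet m w) := by
    intro w
    by_cases hfull : (assignedSet m' w).ncard = L
    · have h1 := Set.ncard_inter_add_ncard_diff_eq_ncard (assignedSet m w) (assignedSet m' w)
        (Set.toFinite _)
      have h2 := Set.ncard_inter_add_ncard_diff_eq_ncard (assignedSet m' w) (assignedSet m w)
        (Set.toFinite _)
      have h3 : (assignedSet m' w ∩ assignedSet m w).ncard
          = (assignedSet m w ∩ assignedSet m' w).ncard := by rw [Set.inter_comm]
      have hle : (assignedSet m w \ assignedSet m' w).ncard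
          ≤ (assignedSet m' w \ assignedSet m w).ncard := by
        have hmw := hm1 w
        omega
      obtain ⟨g, hg1, hg2⟩ := exists_injOn_mapsTo hle
      exact ⟨g, fun _ => ⟨hg1, hg2⟩⟩
    · exact ⟨id, fun h => absurd h hfull⟩
  choose g hgspec using hgex
  set f : S → S := fun s => (m s).elim s (fun w => g w s) with hf
  have hf_eq : ∀ s w, m s = some w → f s = g w s := by
    intro s w h
    rw [hf]
    simp [h]
  -- moving along the chain
  have hmem : ∀ s v w, m' s = some v → m s = some w → sPref s (some w) (some v) →
      m' (f s) = some w ∧ m (f s) ≠ some w := by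
    intro s v w hv hw hpref
    have hfull := (key s v w hv hw hpref).1
    have hsD : s ∈ assignedSet m w \ assignedSet m' w := by
      refine ⟨hw, ?_⟩
      intro hmem'
      have hmem2 : m' s = some w := hmem'
      have : v = w := Option.some_injective _ (hv.symm.trans hmem2)
      rw [this] at hpref
      exact absurd hpref (irrefl_of (sPref s) _)
    have := (hgspec w hfull).2 hsD
    rw [hf_eq s w hw]
    exact this
  have Invstep : ∀ s v w, m' s = some v → m s = some w → sPref s (some w) (some v) →
      ∃ v' w', m' (f s) = some v' ∧ m (f s) = some w' ∧ sPref (f s) (some w') (some v') := by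
    intro s v w hv hw hpref
    obtain ⟨h1, h2⟩ := hmem s v w hv hw hpref
    obtain ⟨x, hx, hpx⟩ := step s v w (f s) hv hw hpref h1 h2
    exact ⟨w, x, h1, hx, hpx⟩
  -- base case: s0 prefers her m-partner to u
  have base : ∃ v w, m' s0 = some v ∧ m s0 = some w ∧ sPref s0 (some w) (some v) := by
    have hnb := hm4 s0 u
    rw [IsBlockingPair] at hnb
    have hd1 : (assignedSet m u).ncard < L ∧ uPref u (some s0) none :=
      ⟨hunder, hm'3 s0 u hs0u⟩
    have hnpref : ¬ sPref s0 (some u) (m s0) := fun h => hnb ⟨h, Or.inl hd1⟩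
    have hsu0 : sPref s0 (some u) none := hm'2 s0 u hs0u
    cases hx : m s0 with
    | none => rw [hx] at hnpref; exact absurd hsu0 hnpref
    | some w =>
      refine ⟨u, w, hs0u, rfl, ?_⟩
      rw [hx] at hnpref
      have hxw : (some w : Option U) ≠ some u := fun h => h0 (hx.trans h)
      haveI := hs s0
      rcases trichotomous_of (sPref s0) (some w) (some u) with h | h | h
      · exact h
      · exact absurd h hxw
      · exact absurd h hnpref
  -- the iterated chain always satisfies the invariant
  have hInvAll : ∀ n, ∃ v w, m' (f^[n] s0) = some v ∧ m (f^[n] s0) = some w ∧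
      sPref (f^[n] s0) (some w) (some v) := by
    intro n
    induction n with
    | zero => simpa using base
    | succ n ih =>
      obtain ⟨v, w, h1, h2, h3⟩ := ih
      rw [Function.iterate_succ_apply']
      exact Invstep _ v w h1 h2 h3
  -- injectivity of the step on the chain
  have hinj : ∀ i j, f (f^[i] s0) = f (f^[j] s0) → f^[i] s0 = f^[j] s0 := by
    intro i j hij
    obtain ⟨v1, w1, ha1, ha2, ha3⟩ := hInvAll i
    obtain ⟨v2, w2, hb1, hb2, hb3⟩ := hInvAll j
    have hc1 := (hmem _ v1 w1 ha1 ha2 ha3).1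
    have hc2 := (hmem _ v2 w2 hb1 hb2 hb3).1
    rw [hij] at hc1
    obtain rfl : w1 = w2 := Option.some_injective _ (hc1.symm.trans hc2)
    have hfull := (key _ v1 w1 ha1 ha2 ha3).1
    have hD1 : f^[i] s0 ∈ assignedSet m w1 \ assignedSet m' w1 := by
      refine ⟨ha2, fun hmem' => ?_⟩
      have hmem2 : m' (f^[i] s0) = some w1 := hmem'
      have : v1 = w1 := Option.some_injective _ (ha1.symm.trans hmem2)
      rw [this] at ha3
      exact absurd ha3 (irrefl_of (sPref _) _)
    have hD2 : f^[j] s0 ∈ assignedSet m w1 \ assignedSet m' w1 := by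
      refine ⟨hb2, fun hmem' => ?_⟩
      have hmem2 : m' (f^[j] s0) = some w1 := hmem'
      have : v2 = w1 := Option.some_injective _ (hb1.symm.trans hmem2)
      rw [this] at hb3
      exact absurd hb3 (irrefl_of (sPref _) _)
    have hij' : g w1 (f^[i] s0) = g w1 (f^[j] s0) := by
      rw [← hf_eq _ w1 ha2, ← hf_eq _ w1 hb2]
      exact hij
    exact (hgspec w1 hfull).1 hD1 hD2 hij'
  -- pigeonhole: the chain returns to s0
  obtain ⟨i, j, hne, hij⟩ := Finite.exists_ne_map_eq_of_infinite (fun n => f^[n] s0)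
  have hcancel : ∀ d i, f^[i] s0 = f^[i + d] s0 → s0 = f^[d] s0 := by
    intro d i
    induction i with
    | zero => intro h; simpa using h
    | succ i ih =>
      intro h
      apply ih
      have h' : f (f^[i] s0) = f (f^[i + d] s0) := by
        have e1 := Function.iterate_succ_apply' f i s0
        have e2 := Function.iterate_succ_apply' f (i + d) s0
        rw [show i + 1 + d = (i + d) + 1 from by omega] at h
        rw [← e1, ← e2]
        exact h
      exact hinj i (i + d) h'
  have hret : ∃ d, 0 < d ∧ s0 = f^[d] s0 := by
    rcases lt_or_gt_of_ne hne with h | h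
    · exact ⟨j - i, by omega, hcancel (j - i) i (by rw [Nat.add_sub_cancel' h.le]; exact hij)⟩
    · exact ⟨i - j, by omega, hcancel (i - j) j (by rw [Nat.add_sub_cancel' h.le]; exact hij.symm)⟩
  obtain ⟨d, hd, hsd⟩ := hret
  obtain ⟨d', rfl⟩ : ∃ d', d = d' + 1 := ⟨d - 1, by omega⟩
  rw [Function.iterate_succ_apply'] at hsd
  -- so s0 = f t for the chain element t
  obtain ⟨v, w, ht1, ht2, ht3⟩ := hInvAll d'
  have hft := (hmem _ v w ht1 ht2 ht3).1
  rw [← hsd, hs0u] at hft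
  obtain rfl : u = w := Option.some_injective _ hft
  exact claimC _ v ht1 ht2 ht3
end

section
/- In a many-to-one matching market, if some stable matching assigns a university u a set T of students with |T| < L, then every stable matching assigns u exactly the set T (and hence T = S(u)). -/
section RHTAux

variable {S U : Type*}

private lemma rht_asymm {α : Type*} {r : α → α → Prop} (h : IsStrictTotalOrder α r)
    {a b : α} (hab : r a b) (hba : r b a) : False :=
  (haveI := h; irrefl (r := r) a) (h.toIsStrictOrder.toIsTrans.trans a b a hab hba)

private lemma rht_irrefl {α : Type*} {r : α → α → Prop} (h : IsStrictTotalOrder α r)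
    {a : α} (haa : r a a) : False :=
  (haveI := h; irrefl (r := r) a) haa


private lemma rht_bridge {S : Type*} [Fintype S] (p : S → Prop) [DecidablePred p] :
    ({s | p s} : Set S).ncard = (Finset.univ.filter p).card := by
  rw [Set.ncard_eq_toFinset_card']
  simp [Set.toFinset_setOf]

/-- Key consequence of stability: if `s` is matched to `v` by `m₁` and prefers `v`
to her `m₂`-assignment, then `v` is full in `m₂` and every `m₂`-student of `v`
beats `s` in `v`'s preference. -/
private lemma rht_L1 {L : ℕ} {sPref : S → Option U → Option U → Prop}
    {uPref : U → Option S → Option S → Prop}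
    (hs : ∀ s, IsStrictTotalOrder (Option U) (sPref s))
    (hu : ∀ u, IsStrictTotalOrder (Option S) (uPref u))
    {m₁ m₂ : S → Option U}
    (h₁ : IsStableMatching L sPref uPref m₁) (h₂ : IsStableMatching L sPref uPref m₂)
    {s : S} {v : U} (hm : m₁ s = some v) (hp : sPref s (some v) (m₂ s)) :
    (assignedSet m₂ v).ncard = L ∧ ∀ x, m₂ x = some v → uPref v (some x) (some s) := by
  have hnb := h₂.2.2.2 s v
  have hAB : ¬ ((((assignedSet m₂ v).ncard < L ∧ uPref v (some s) none) ∨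
      ∃ t : S, m₂ t = some v ∧ uPref v (some s) (some t))) := fun h => hnb ⟨hp, h⟩
  push_neg at hAB
  obtain ⟨hA, hB⟩ := hAB
  have hvs : uPref v (some s) none := h₁.2.2.1 s v hm
  have hfull : (assignedSet m₂ v).ncard = L :=
    le_antisymm (h₂.1 v) (not_lt.1 fun hlt => hA hlt hvs)
  refine ⟨hfull, fun x hx => ?_⟩
  rcases (haveI := hu v; trichotomous (r := uPref v) (some s) (some x)) with h | h | h
  · exact absurd h (hB x hx)
  · exfalso
    injection h with h
    subst h
    rw [hx] at hp
    exact rht_irrefl (hs s) hp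
  · exact h

/-- Given the witness `s` of `rht_L1`, every student assigned to `v` by `m₂`
but not by `m₁` strictly prefers her `m₁`-assignment to `v`. -/
private lemma rht_L2 {L : ℕ} {sPref : S → Option U → Option U → Prop}
    {uPref : U → Option S → Option S → Prop}
    (hs : ∀ s, IsStrictTotalOrder (Option U) (sPref s))
    (hu : ∀ u, IsStrictTotalOrder (Option S) (uPref u))
    {m₁ m₂ : S → Option U}
    (h₁ : IsStableMatching L sPref uPref m₁) (h₂ : IsStableMatching L sPref uPref m₂)
    {s : S} {v : U} (hm : m₁ s = some v) (hp : sPref s (some v) (m₂ s))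
    {t : S} (ht2 : m₂ t = some v) (ht1 : m₁ t ≠ some v) :
    sPref t (m₁ t) (some v) := by
  rcases (haveI := hs t; trichotomous (r := sPref t) (m₁ t) (some v)) with h | h | h
  · exact h
  · exact absurd h ht1
  · exact absurd ⟨h, Or.inr ⟨s, hm, (rht_L1 hs hu h₁ h₂ hm hp).2 t ht2⟩⟩ (h₁.2.2.2 t v)

/-- Any student who strictly prefers her `m₁`-assignment to her `m₂`-assignment
is matched in `m₁`. -/
private lemma rht_matched {L : ℕ} {sPref : S → Option U → Option U → Prop}
    {uPref : U → Option S → Option S → Prop}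
    (hs : ∀ s, IsStrictTotalOrder (Option U) (sPref s))
    {m₁ m₂ : S → Option U}
    (h₂ : IsStableMatching L sPref uPref m₂)
    {s : S} (hp : sPref s (m₁ s) (m₂ s)) : ∃ v, m₁ s = some v := by
  cases h1 : m₁ s with
  | some v => exact ⟨v, rfl⟩
  | none =>
    exfalso
    rw [h1] at hp
    cases h2 : m₂ s with
    | none => rw [h2] at hp; exact rht_irrefl (hs s) hp
    | some w =>
      rw [h2] at hp
      exact rht_asymm (hs s) hp (h₂.2.1 s w h2)

/-- The counting engine: for any two stable matchings `m₁, m₂` and any university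
`v`, the number of students assigned to `v` by `m₂` who prefer `m₁` equals the
number assigned to `v` by `m₁` who prefer `m₁`; moreover if the latter set is
nonempty, `v` is full in `m₁`. -/
private lemma rht_engine [Fintype S] [Fintype U] {L : ℕ}
    {sPref : S → Option U → Option U → Prop}
    {uPref : U → Option S → Option S → Prop}
    (hs : ∀ s, IsStrictTotalOrder (Option U) (sPref s))
    (hu : ∀ u, IsStrictTotalOrder (Option S) (uPref u))
    {m₁ m₂ : S → Option U}
    (h₁ : IsStableMatching L sPref uPref m₁) (h₂ : IsStableMatching L sPref uPref m₂)
    (v : U) :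
    ({s | m₂ s = some v ∧ sPref s (m₁ s) (m₂ s)} : Set S).ncard
      = ({s | m₁ s = some v ∧ sPref s (m₁ s) (m₂ s)} : Set S).ncard
    ∧ (({s | m₁ s = some v ∧ sPref s (m₁ s) (m₂ s)} : Set S).Nonempty →
        (assignedSet m₁ v).ncard = L) := by
  classical
  have key : ∀ w : U,
      (Finset.univ.filter fun s => m₁ s = some w ∧ sPref s (m₁ s) (m₂ s)).card
        ≤ (Finset.univ.filter fun s => m₂ s = some w ∧ sPref s (m₁ s) (m₂ s)).card
      ∧ ((Finset.univ.filter fun s => m₁ s = some w ∧ sPref s (m₁ s) (m₂ s)).Nonempty →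
          (Finset.univ.filter fun s => m₂ s = some w ∧ sPref s (m₁ s) (m₂ s)).card
            ≤ (Finset.univ.filter fun s => m₁ s = some w ∧ sPref s (m₁ s) (m₂ s)).card →
          (Finset.univ.filter fun t => m₁ t = some w).card = L) := by
    intro w
    by_cases hne : (Finset.univ.filter fun s => m₁ s = some w ∧ sPref s (m₁ s) (m₂ s)).Nonempty
    swap
    · refine ⟨?_, fun h _ => absurd h hne⟩
      rw [Finset.not_nonempty_iff_eq_empty.mp hne]
      simp
    · obtain ⟨s, hsmem⟩ := hne
      rw [Finset.mem_filter] at hsmem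
      obtain ⟨-, hm1s, hps⟩ := hsmem
      have hps' : sPref s (some w) (m₂ s) := by rw [← hm1s]; exact hps
      have hL1 := rht_L1 hs hu h₁ h₂ hm1s hps'
      have hM₂card : (Finset.univ.filter fun t => m₂ t = some w).card = L := by
        rw [← rht_bridge]; exact hL1.1
      have hM₁card : (Finset.univ.filter fun t => m₁ t = some w).card ≤ L := by
        rw [← rht_bridge]; exact h₁.1 w
      have hsub1 : (Finset.univ.filter fun s => m₁ s = some w ∧ sPref s (m₁ s) (m₂ s))
          ⊆ (Finset.univ.filter fun t => m₁ t = some w)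
            \ (Finset.univ.filter fun t => m₂ t = some w) := by
        intro t ht
        rw [Finset.mem_filter] at ht
        rw [Finset.mem_sdiff, Finset.mem_filter, Finset.mem_filter]
        refine ⟨⟨Finset.mem_univ t, ht.2.1⟩, fun h2 => ?_⟩
        have hp := ht.2.2
        rw [ht.2.1, h2.2] at hp
        exact rht_irrefl (hs t) hp
      have hsub2 : (Finset.univ.filter fun t => m₂ t = some w)
            \ (Finset.univ.filter fun t => m₁ t = some w)
          ⊆ (Finset.univ.filter fun s => m₂ s = some w ∧ sPref s (m₁ s) (m₂ s)) := by
        intro t ht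
        rw [Finset.mem_sdiff, Finset.mem_filter, Finset.mem_filter] at ht
        have ht2 : m₂ t = some w := ht.1.2
        have ht1 : m₁ t ≠ some w := fun h => ht.2 ⟨Finset.mem_univ t, h⟩
        rw [Finset.mem_filter]
        refine ⟨Finset.mem_univ t, ht2, ?_⟩
        rw [ht2]
        exact rht_L2 hs hu h₁ h₂ hm1s hps' ht2 ht1
      have c1 := Finset.card_le_card hsub1
      have c2 := Finset.card_le_card hsub2
      have c3 := Finset.card_sdiff_add_card_inter
        (Finset.univ.filter fun t => m₁ t = some w) (Finset.univ.filter fun t => m₂ t = some w)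
      have c4 := Finset.card_sdiff_add_card_inter
        (Finset.univ.filter fun t => m₂ t = some w) (Finset.univ.filter fun t => m₁ t = some w)
      have c5 : ((Finset.univ.filter fun t => m₁ t = some w)
            ∩ (Finset.univ.filter fun t => m₂ t = some w)).card
          = ((Finset.univ.filter fun t => m₂ t = some w)
            ∩ (Finset.univ.filter fun t => m₁ t = some w)).card := by
        rw [Finset.inter_comm]
      constructor
      · omega
      · intro _ hle
        omega
  have sum1 : (Finset.univ.filter fun s => sPref s (m₁ s) (m₂ s)).card
      = ∑ w : U, (Finset.univ.filter fun s => m₁ s = some w ∧ sPref s (m₁ s) (m₂ s)).card := by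
    rw [Finset.card_eq_sum_card_fiberwise (f := fun s => m₁ s)
      (t := (Finset.univ : Finset U).image some) (fun s hsD => by
        rw [Finset.mem_coe, Finset.mem_filter] at hsD
        obtain ⟨v', hv'⟩ := rht_matched hs h₂ hsD.2
        simp [hv'])]
    rw [Finset.sum_image (fun a _ b _ hab => Option.some_injective U hab)]
    apply Finset.sum_congr rfl
    intro w _
    congr 1
    ext t
    simp only [Finset.mem_filter, Finset.mem_univ, true_and]
    tauto
  have sum2 : ∑ w : U, (Finset.univ.filter fun s => m₂ s = some w ∧ sPref s (m₁ s) (m₂ s)).card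
      ≤ (Finset.univ.filter fun s => sPref s (m₁ s) (m₂ s)).card := by
    have hfib : (Finset.univ.filter fun s => sPref s (m₁ s) (m₂ s)).card
        = ∑ o : Option U,
          ((Finset.univ.filter fun s => sPref s (m₁ s) (m₂ s)).filter
            (fun s => m₂ s = o)).card :=
      Finset.card_eq_sum_card_fiberwise (fun s _ => Finset.mem_univ _)
    have h2 : ∑ w : U, (Finset.univ.filter fun s => m₂ s = some w ∧ sPref s (m₁ s) (m₂ s)).card
        = ∑ o ∈ (Finset.univ : Finset U).image some,
          ((Finset.univ.filter fun s => sPref s (m₁ s) (m₂ s)).filter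
            (fun s => m₂ s = o)).card := by
      rw [Finset.sum_image (fun a _ b _ hab => Option.some_injective U hab)]
      apply Finset.sum_congr rfl
      intro w _
      congr 1
      ext t
      simp only [Finset.mem_filter, Finset.mem_univ, true_and]
      tauto
    rw [h2, hfib]
    exact Finset.sum_le_sum_of_subset (Finset.subset_univ _)
  have hsum_le : ∑ w : U, (Finset.univ.filter fun s => m₁ s = some w ∧ sPref s (m₁ s) (m₂ s)).card
      ≤ ∑ w : U, (Finset.univ.filter fun s => m₂ s = some w ∧ sPref s (m₁ s) (m₂ s)).card :=
    Finset.sum_le_sum (fun w _ => (key w).1)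
  have hsums_eq : ∑ w : U, (Finset.univ.filter fun s => m₁ s = some w ∧ sPref s (m₁ s) (m₂ s)).card
      = ∑ w : U, (Finset.univ.filter fun s => m₂ s = some w ∧ sPref s (m₁ s) (m₂ s)).card := by
    omega
  have heq := (Finset.sum_eq_sum_iff_of_le (fun w _ => (key w).1)).mp hsums_eq v (Finset.mem_univ v)
  constructor
  · rw [← rht_bridge, ← rht_bridge] at heq
    exact heq.symm
  · intro hne
    obtain ⟨s, hsmem⟩ := hne
    have hcardL := (key v).2 ⟨s, Finset.mem_filter.mpr ⟨Finset.mem_univ s, hsmem⟩⟩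
      (le_of_eq heq.symm)
    rw [← rht_bridge] at hcardL
    exact hcardL

end RHTAux

/-- If some stable matching assigns a university `u` a set `T` of students with
`|T| < L`, then every stable matching assigns `u` exactly the set `T`, and hence
`T = S(u)`, the set of stable partners of `u`. -/
theorem assigned_eq_of_underfilled
    {S U : Type*} [Fintype S] [Fintype U]
    (L : ℕ) (hL : 1 ≤ L)
    (sPref : S → Option U → Option U → Prop) (uPref : U → Option S → Option S → Prop)
    (hs : ∀ s, IsStrictTotalOrder (Option U) (sPref s))
    (hu : ∀ u, IsStrictTotalOrder (Option S) (uPref u))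
    (u : U) (m : S → Option U) (hm : IsStableMatching L sPref uPref m)
    (hcard : (assignedSet m u).ncard < L) :
    (∀ m' : S → Option U, IsStableMatching L sPref uPref m' →
        assignedSet m' u = assignedSet m u) ∧
      assignedSet m u = stablePartners L sPref uPref u := by
  have main : ∀ m' : S → Option U, IsStableMatching L sPref uPref m' →
      assignedSet m' u = assignedSet m u := by
    intro m' hm'
    have E := rht_engine hs hu hm hm' u
    have E' := rht_engine hs hu hm' hm u
    have hA1empty : ({s | m s = some u ∧ sPref s (m s) (m' s)} : Set S) = ∅ := by
      by_contra h
      exact absurd (E.2 (Set.nonempty_iff_ne_empty.mpr h)) (ne_of_lt hcard)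
    have hA2empty : ({s | m' s = some u ∧ sPref s (m s) (m' s)} : Set S) = ∅ := by
      refine (Set.ncard_eq_zero (Set.toFinite _)).mp ?_
      rw [E.1, hA1empty]
      simp
    have hA1'empty : ({s | m' s = some u ∧ sPref s (m' s) (m s)} : Set S) = ∅ := by
      refine Set.eq_empty_iff_forall_notMem.mpr ?_
      rintro s ⟨h1, h2⟩
      have h2' : sPref s (some u) (m s) := by rw [← h1]; exact h2
      exact absurd (rht_L1 hs hu hm' hm h1 h2').1 (ne_of_lt hcard)
    have hA2'empty : ({s | m s = some u ∧ sPref s (m' s) (m s)} : Set S) = ∅ := by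
      refine (Set.ncard_eq_zero (Set.toFinite _)).mp ?_
      rw [E'.1, hA1'empty]
      simp
    ext t
    simp only [assignedSet, Set.mem_setOf_eq]
    constructor
    · intro h'
      rcases (haveI := hs t; trichotomous (r := sPref t) (m t) (m' t)) with h | h | h
      · exact absurd ⟨h', h⟩ (Set.eq_empty_iff_forall_notMem.mp hA2empty t)
      · exact h.trans h'
      · exact absurd ⟨h', h⟩ (Set.eq_empty_iff_forall_notMem.mp hA1'empty t)
    · intro h'
      rcases (haveI := hs t; trichotomous (r := sPref t) (m t) (m' t)) with h | h | h
      · exact absurd ⟨h', h⟩ (Set.eq_empty_iff_forall_notMem.mp hA1empty t)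
      · exact h.symm.trans h'
      · exact absurd ⟨h', h⟩ (Set.eq_empty_iff_forall_notMem.mp hA2'empty t)
  refine ⟨main, ?_⟩
  ext s
  simp only [stablePartners, assignedSet, Set.mem_setOf_eq]
  constructor
  · intro h
    exact ⟨m, hm, h⟩
  · rintro ⟨m', hm', h⟩
    have hEq := main m' hm'
    have : s ∈ assignedSet m' u := h
    rw [hEq] at this
    exact this
end

section
/- Let a many-to-one matching market be given on students S ∪ {s₀} and universities U (capacity L, strict preferences: each student over U ∪ {⊥}, each university over S ∪ {s₀} ∪ {⊥}), and let M be a stable matching of the restricted market on students S. Then there exists a stable matching M' of the full market (students S ∪ {s₀}) such that for every university u there is an injection ι from M(u) into M'(u) with the property that u weakly prefers ι(t) to t for every student t ∈ M(u); in particular every university is assigned at least as many students in M' as in M. -/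
section Chain

attribute [local instance] Classical.propDecidable

/-- A strict total order on finite nonempty sets (transported along an injection)
has a top element. -/
theorem sto_exists_top {α β : Type*} (r : β → β → Prop) [IsStrictTotalOrder β r]
    (f : α → β) (hf : Function.Injective f) (s : Finset α) (h : s.Nonempty) :
    ∃ a ∈ s, ∀ b ∈ s, b ≠ a → r (f a) (f b) := by
  classical
  induction s using Finset.induction_on with
  | empty => exact absurd h (by simp)
  | @insert a s ha ih =>
    rcases s.eq_empty_or_nonempty with rfl | hs
    · exact ⟨a, by simp, by simp⟩
    · obtain ⟨c, hc, hcmax⟩ := ih hs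
      have hac : a ≠ c := fun h => ha (h ▸ hc)
      rcases trichotomous_of r (f a) (f c) with hlt | heq | hgt
      · refine ⟨a, Finset.mem_insert_self _ _, fun b hb hba => ?_⟩
        rcases Finset.mem_insert.1 hb with rfl | hb
        · exact absurd rfl hba
        · rcases eq_or_ne b c with rfl | hbc
          · exact hlt
          · exact _root_.trans hlt (hcmax b hb hbc)
      · exact absurd (hf heq) hac
      · refine ⟨c, Finset.mem_insert_of_mem hc, fun b hb hbc => ?_⟩
        rcases Finset.mem_insert.1 hb with rfl | hb
        · exact hgt
        · exact hcmax b hb hbc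

theorem sto_exists_bot {α β : Type*} (r : β → β → Prop) [IsStrictTotalOrder β r]
    (f : α → β) (hf : Function.Injective f) (s : Finset α) (h : s.Nonempty) :
    ∃ a ∈ s, ∀ b ∈ s, b ≠ a → r (f b) (f a) := by
  haveI := IsStrictTotalOrder.swap r
  exact sto_exists_top (Function.swap r) f hf s h

variable {T U : Type*} [Fintype T] [Fintype U]

/-- The finset of students assigned to `u`. -/
noncomputable def slots (A : T → Option U) (u : U) : Finset T :=
  Finset.univ.filter fun t => A t = some u

lemma mem_slots {A : T → Option U} {u : U} {t : T} : t ∈ slots A u ↔ A t = some u := by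
  simp [slots]

lemma assignedSet_eq_slots (A : T → Option U) (u : U) :
    assignedSet A u = ↑(slots A u) := by
  ext t; simp [assignedSet, slots]

lemma ncard_assignedSet (A : T → Option U) (u : U) :
    (assignedSet A u).ncard = (slots A u).card := by
  rw [assignedSet_eq_slots, Set.ncard_coe_finset]

/-- State of the vacancy-chain algorithm. -/
structure MState (T U : Type*) where
  A : T → Option U
  act : Option T
  R : T → Finset U

/-- Invariant of the vacancy-chain algorithm. -/
structure ChainInv (L : ℕ) (sPref : T → Option U → Option U → Prop)
    (uPref : U → Option T → Option T → Prop) (A₀ : T → Option U)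
    (σ : MState T U) : Prop where
  cap : ∀ u, (slots σ.A u).card ≤ L
  sIR : ∀ t u, σ.A t = some u → sPref t (some u) none
  uIR : ∀ t u, σ.A t = some u → uPref u (some t) none
  actFree : ∀ t, σ.act = some t → σ.A t = none
  rej : ∀ t u, u ∈ σ.R t →
    (∀ x ∈ slots σ.A u, uPref u (some x) (some t)) ∧
      ((slots σ.A u).card = L ∨ uPref u none (some t))
  noBlock : ∀ t u, σ.act ≠ some t → ¬ IsBlockingPair L sPref uPref σ.A t u
  inj : ∀ u, ∃ ι : assignedSet A₀ u → assignedSet σ.A u, Function.Injective ι ∧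
    ∀ t : assignedSet A₀ u, (ι t : T) = (t : T) ∨ uPref u (some (ι t : T)) (some (t : T))

variable {L : ℕ} {sPref : T → Option U → Option U → Prop}
  {uPref : U → Option T → Option T → Prop} {A₀ : T → Option U}

/-- A rejected pair is never a blocking pair. -/
lemma rej_not_block (hu : ∀ u, IsStrictTotalOrder (Option T) (uPref u))
    {σ : MState T U} (hσ : ChainInv L sPref uPref A₀ σ) {t : T} {u : U}
    (hR : u ∈ σ.R t) : ¬ IsBlockingPair L sPref uPref σ.A t u := by
  haveI := hu u
  rintro ⟨-, ⟨hlt, hacc⟩ | ⟨x, hx, hux⟩⟩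
  · rcases (hσ.rej t u hR).2 with hfull | hnone
    · rw [ncard_assignedSet, hfull] at hlt; exact lt_irrefl _ hlt
    · exact asymm hacc hnone
  · exact asymm hux ((hσ.rej t u hR).1 x (mem_slots.2 hx))

lemma wpref_trans (hu : ∀ u, IsStrictTotalOrder (Option T) (uPref u)) {u : U} {a b c : T}
    (h1 : a = b ∨ uPref u (some a) (some b)) (h2 : b = c ∨ uPref u (some b) (some c)) :
    a = c ∨ uPref u (some a) (some c) := by
  haveI := hu u
  rcases h1 with rfl | h1
  · exact h2
  · rcases h2 with rfl | h2
    · exact Or.inr h1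
    · exact Or.inr (_root_.trans h1 h2)

/-- Composing the invariant injections with one-step injections. -/
lemma inj_comp (hu : ∀ u, IsStrictTotalOrder (Option T) (uPref u)) {A A' : T → Option U}
    (hold : ∀ u, ∃ ι : assignedSet A₀ u → assignedSet A u, Function.Injective ι ∧
      ∀ t : assignedSet A₀ u, (ι t : T) = (t : T) ∨ uPref u (some (ι t : T)) (some (t : T)))
    (hstep : ∀ u, ∃ j : assignedSet A u → assignedSet A' u, Function.Injective j ∧
      ∀ x : assignedSet A u, (j x : T) = (x : T) ∨ uPref u (some (j x : T)) (some (x : T))) :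
    ∀ u, ∃ ι : assignedSet A₀ u → assignedSet A' u, Function.Injective ι ∧
      ∀ t : assignedSet A₀ u, (ι t : T) = (t : T) ∨ uPref u (some (ι t : T)) (some (t : T)) := by
  intro u
  obtain ⟨ι, hι1, hι2⟩ := hold u
  obtain ⟨j, hj1, hj2⟩ := hstep u
  exact ⟨j ∘ ι, hj1.comp hι1, fun t => wpref_trans hu (hj2 (ι t)) (hι2 t)⟩

theorem progress (hL : 1 ≤ L)
    (hs : ∀ s, IsStrictTotalOrder (Option U) (sPref s))
    (hu : ∀ u, IsStrictTotalOrder (Option T) (uPref u))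
    (σ : MState T U) (hσ : ChainInv L sPref uPref A₀ σ) (s : T) (hact : σ.act = some s) :
    ∃ σ' : MState T U, ChainInv L sPref uPref A₀ σ' ∧
      (σ'.act = none ∨ ∑ t, (σ'.R t).card = (∑ t, (σ.R t).card) + 1) := by
  haveI hss := hs s
  have hAs : σ.A s = none := hσ.actFree s hact
  set P : Finset U := Finset.univ.filter (fun u => sPref s (some u) none ∧ u ∉ σ.R s) with hPdef
  have memP : ∀ v, v ∈ P ↔ sPref s (some v) none ∧ v ∉ σ.R s := by
    intro v; simp [hPdef]
  by_cases hPne : P.Nonempty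
  swap
  · -- EXHAUST: `s` has been rejected everywhere acceptable; stop.
    refine ⟨⟨σ.A, none, σ.R⟩, ⟨hσ.cap, hσ.sIR, hσ.uIR, by simp, hσ.rej, ?_, hσ.inj⟩,
      Or.inl rfl⟩
    intro t v _
    rcases eq_or_ne t s with rfl | hts
    · intro hb
      have h1 : sPref t (some v) none := by
        have := hb.1; rwa [hAs] at this
      have hvR : v ∈ σ.R t := by
        by_contra hvR
        exact hPne ⟨v, (memP v).2 ⟨h1, hvR⟩⟩
      exact rej_not_block hu hσ hvR hb
    · exact hσ.noBlock t v (by rw [hact]; simp [hts.symm])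
  · -- `s` proposes to her favourite university `u` not yet rejected from
    obtain ⟨u, huP, hutop⟩ := sto_exists_top (sPref s) some (Option.some_injective U) P hPne
    obtain ⟨huacc, huR⟩ := (memP u).1 huP
    -- any university `s` would rather have than `u` has already rejected her
    have key : ∀ v, sPref s (some v) (some u) → v ∈ σ.R s := by
      intro v hv
      by_contra hvR
      have hvP : v ∈ P := (memP v).2 ⟨_root_.trans hv huacc, hvR⟩
      rcases eq_or_ne v u with rfl | hvu
      · exact irrefl _ hv
      · exact asymm hv (hutop v hvP hvu)
    set Au := slots σ.A u with hAudef
    have hsAu : s ∉ Au := by simp [hAudef, mem_slots, hAs]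
    -- helper to build the two rejection branches uniformly
    have reject_step : (∀ x ∈ Au, uPref u (some x) (some s)) →
        (Au.card = L ∨ uPref u none (some s)) →
        ∃ σ' : MState T U, ChainInv L sPref uPref A₀ σ' ∧
          (σ'.act = none ∨ ∑ t, (σ'.R t).card = (∑ t, (σ.R t).card) + 1) := by
      intro hall hor
      refine ⟨⟨σ.A, some s, fun t => if t = s then insert u (σ.R t) else σ.R t⟩,
        ⟨hσ.cap, hσ.sIR, hσ.uIR, ?_, ?_, ?_, hσ.inj⟩, Or.inr ?_⟩
      · intro t ht
        simp only [Option.some_inj] at ht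
        exact ht ▸ hAs
      · intro t v hv
        simp only at hv
        by_cases hts : t = s
        · subst hts
          rw [if_pos rfl, Finset.mem_insert] at hv
          rcases hv with rfl | hv
          · exact ⟨hall, hor⟩
          · exact hσ.rej t v hv
        · rw [if_neg hts] at hv
          exact hσ.rej t v hv
      · intro t v hne
        refine hσ.noBlock t v ?_
        rw [hact]; simpa using hne
      · have huRs : u ∉ σ.R s := huR
        have hcards : ∀ t, (if t = s then insert u (σ.R t) else σ.R t).card =
            (if t = s then 1 else 0) + (σ.R t).card := by
          intro t
          by_cases hts : t = s
          · subst hts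
            rw [if_pos rfl, if_pos rfl, Finset.card_insert_of_notMem huRs]
            omega
          · rw [if_neg hts, if_neg hts]; omega
        simp only [hcards, Finset.sum_add_distrib, Finset.sum_ite_eq',
          Finset.mem_univ, if_pos]
        omega
    by_cases hfulllt : Au.card < L
    · by_cases hacc : uPref u (some s) none
      · -- ACCEPT into a free slot
        haveI := hu u
        set A' : T → Option U := Function.update σ.A s (some u) with hA'def
        have hA's : A' s = some u := Function.update_self _ _ _
        have hA'ne : ∀ t, t ≠ s → A' t = σ.A t := fun t ht => Function.update_of_ne ht _ _
        have hslots_u : slots A' u = insert s Au := by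
          ext t
          rcases eq_or_ne t s with rfl | hts
          · simp [mem_slots, hA's]
          · simp [mem_slots, hA'ne t hts, hts, hAudef]
        have hslots_v : ∀ v, v ≠ u → slots A' v = slots σ.A v := by
          intro v hv
          ext t
          rcases eq_or_ne t s with rfl | hts
          · simp [mem_slots, hA's, hAs, hv.symm]
          · simp [mem_slots, hA'ne t hts]
        have hcard_u : (slots A' u).card = Au.card + 1 := by
          rw [hslots_u, Finset.card_insert_of_notMem hsAu]
        refine ⟨⟨A', none, σ.R⟩, ⟨?_, ?_, ?_, by simp, ?_, ?_, ?_⟩, Or.inl rfl⟩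
        · intro v
          rcases eq_or_ne v u with rfl | hv
          · rw [hcard_u]; omega
          · rw [hslots_v v hv]; exact hσ.cap v
        · intro t v htv
          dsimp only at htv
          rcases eq_or_ne t s with rfl | hts
          · rw [hA's] at htv
            exact (Option.some_inj.1 htv) ▸ huacc
          · exact hσ.sIR t v (by rwa [hA'ne t hts] at htv)
        · intro t v htv
          dsimp only at htv
          rcases eq_or_ne t s with rfl | hts
          · rw [hA's] at htv
            obtain rfl := Option.some_inj.1 htv
            exact hacc
          · exact hσ.uIR t v (by rwa [hA'ne t hts] at htv)
        · intro t v hv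
          obtain ⟨h1, h2⟩ := hσ.rej t v hv
          rcases eq_or_ne v u with rfl | hvu
          · have hnt : uPref v none (some t) := by
              rcases h2 with h | h
              · rw [← hAudef] at h; omega
              · exact h
            constructor
            · intro x hx
              rw [hslots_u, Finset.mem_insert] at hx
              rcases hx with rfl | hx
              · exact _root_.trans hacc hnt
              · exact h1 x (by rwa [hAudef] at hx)
            · exact Or.inr hnt
          · rw [hslots_v v hvu]; exact ⟨h1, h2⟩
        · intro t v _
          rintro ⟨h1, h2⟩
          dsimp only at h1 h2
          rcases eq_or_ne t s with rfl | hts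
          · rw [hA's] at h1
            have hvR : v ∈ σ.R t := key v h1
            have hvu : v ≠ u := fun h => huR (h ▸ hvR)
            obtain ⟨hr1, hr2⟩ := hσ.rej t v hvR
            rcases h2 with ⟨hlt, hsacc⟩ | ⟨x, hxv, hx⟩
            · rw [ncard_assignedSet, hslots_v v hvu] at hlt
              rcases hr2 with h | h
              · omega
              · exact asymm hsacc h
            · have hxm : x ∈ slots A' v := mem_slots.2 hxv
              rw [hslots_v v hvu] at hxm
              exact asymm hx (hr1 x hxm)
          · have h1' : sPref t (some v) (σ.A t) := by rwa [hA'ne t hts] at h1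
            have hnb := hσ.noBlock t v
              (by rw [hact]; exact fun h => hts (Option.some_inj.1 h).symm)
            rcases eq_or_ne v u with rfl | hvu
            · have hnt : uPref v none (some t) := by
                rcases trichotomous_of (uPref v) (some t) none with h | h | h
                · refine absurd ?_ hnb
                  refine ⟨h1', Or.inl ⟨?_, h⟩⟩
                  rw [ncard_assignedSet, ← hAudef]; exact hfulllt
                · exact absurd h (by simp)
                · exact h
              rcases h2 with ⟨_, hsacc⟩ | ⟨x, hxv, hx⟩
              · exact asymm hsacc hnt
              · rcases eq_or_ne x s with rfl | hxs
                · exact asymm hx (_root_.trans hacc hnt)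
                · have hxold : σ.A x = some v := by rwa [hA'ne x hxs] at hxv
                  exact hnb ⟨h1', Or.inr ⟨x, hxold, hx⟩⟩
            · refine hnb ⟨h1', ?_⟩
              rcases h2 with ⟨hlt, hsacc⟩ | ⟨x, hxv, hx⟩
              · rw [ncard_assignedSet, hslots_v v hvu, ← ncard_assignedSet] at hlt
                exact Or.inl ⟨hlt, hsacc⟩
              · have hxm : x ∈ slots A' v := mem_slots.2 hxv
                rw [hslots_v v hvu] at hxm
                exact Or.inr ⟨x, mem_slots.1 hxm, hx⟩
        · refine inj_comp hu hσ.inj ?_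
          intro v
          refine ⟨fun x => ⟨x.1, ?_⟩, fun a b h => Subtype.ext
            (by simpa using congrArg Subtype.val h), fun x => Or.inl rfl⟩
          have hxv : σ.A (x : T) = some v := x.2
          have hxs : (x : T) ≠ s := fun h => by
            rw [h, hAs] at hxv; exact nomatch hxv
          show A' (x : T) = some v
          rw [hA'ne _ hxs]; exact hxv
      · -- reject: `u` finds `s` unacceptable
        haveI := hu u
        have hnone : uPref u none (some s) := by
          rcases trichotomous_of (uPref u) (some s) none with h | h | h
          · exact absurd h hacc
          · exact absurd h (by simp)
          · exact h
        refine reject_step (fun x hx => ?_) (Or.inr hnone)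
        exact _root_.trans (hσ.uIR x u (mem_slots.1 hx)) hnone
    · have hcard : Au.card = L := le_antisymm (hσ.cap u) (not_lt.1 hfulllt)
      by_cases hne : ∃ y ∈ Au, uPref u (some s) (some y)
      · -- ACCEPT, displacing the worst assigned student
        haveI := hu u
        obtain ⟨y₀, hy₀Au, hsy₀⟩ := hne
        obtain ⟨y, hyAu, hybot⟩ :=
          sto_exists_bot (uPref u) some (Option.some_injective T) Au ⟨y₀, hy₀Au⟩
        have hsy : uPref u (some s) (some y) := by
          rcases eq_or_ne y₀ y with rfl | hne'
          · exact hsy₀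
          · exact _root_.trans hsy₀ (hybot y₀ hy₀Au hne')
        have hyA : σ.A y = some u := mem_slots.1 (hAudef ▸ hyAu)
        have hys : y ≠ s := fun h => hsAu (h ▸ hyAu)
        set A' : T → Option U := fun t => if t = s then some u else
          if t = y then none else σ.A t with hA'def
        have hA's : A' s = some u := by simp [hA'def]
        have hA'y : A' y = none := by simp [hA'def, hys]
        have hA'ne : ∀ t, t ≠ s → t ≠ y → A' t = σ.A t := by
          intro t h1 h2; simp [hA'def, h1, h2]
        have huRy : u ∉ σ.R y := by
          intro hmem
          exact irrefl _ ((hσ.rej y u hmem).1 y (hAudef ▸ hyAu))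
        have hslots_u : slots A' u = insert s (Au.erase y) := by
          ext t
          rcases eq_or_ne t s with rfl | hts
          · simp [mem_slots, hA's]
          · rcases eq_or_ne t y with rfl | hty
            · simp [mem_slots, hA'y, hts]
            · simp [mem_slots, hA'ne t hts hty, hts, hty, hAudef]
        have hslots_v : ∀ v, v ≠ u → slots A' v = slots σ.A v := by
          intro v hv
          ext t
          rcases eq_or_ne t s with rfl | hts
          · simp [mem_slots, hA's, hAs, hv.symm]
          · rcases eq_or_ne t y with rfl | hty
            · simp [mem_slots, hA'y, hyA, hv.symm]
            · simp [mem_slots, hA'ne t hts hty]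
        have hsAuE : s ∉ Au.erase y := fun h => hsAu (Finset.mem_erase.1 h).2
        have hcard_u : (slots A' u).card = L := by
          rw [hslots_u, Finset.card_insert_of_notMem hsAuE, Finset.card_erase_of_mem hyAu]
          have h1 : 1 ≤ Au.card := Finset.card_pos.2 ⟨y, hyAu⟩
          omega
        refine ⟨⟨A', some y, fun t => if t = y then insert u (σ.R t) else σ.R t⟩,
          ⟨?_, ?_, ?_, ?_, ?_, ?_, ?_⟩, Or.inr ?_⟩
        · intro v
          dsimp only
          rcases eq_or_ne v u with rfl | hv
          · exact le_of_eq hcard_u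
          · rw [hslots_v v hv]; exact hσ.cap v
        · intro t v htv
          dsimp only at htv
          rcases eq_or_ne t s with rfl | hts
          · rw [hA's] at htv
            exact (Option.some_inj.1 htv) ▸ huacc
          · rcases eq_or_ne t y with rfl | hty
            · rw [hA'y] at htv; exact nomatch htv
            · exact hσ.sIR t v (by rwa [hA'ne t hts hty] at htv)
        · intro t v htv
          dsimp only at htv
          rcases eq_or_ne t s with rfl | hts
          · rw [hA's] at htv
            obtain rfl := Option.some_inj.1 htv
            exact _root_.trans hsy (hσ.uIR y _ hyA)
          · rcases eq_or_ne t y with rfl | hty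
            · rw [hA'y] at htv; exact nomatch htv
            · exact hσ.uIR t v (by rwa [hA'ne t hts hty] at htv)
        · intro t ht
          dsimp only at ht ⊢
          obtain rfl := Option.some_inj.1 ht
          exact hA'y
        · intro t v hv
          dsimp only at hv ⊢
          by_cases hty : t = y
          · subst hty
            rw [if_pos rfl, Finset.mem_insert] at hv
            rcases hv with rfl | hv
            · refine ⟨?_, Or.inl hcard_u⟩
              intro x hx
              rw [hslots_u, Finset.mem_insert] at hx
              rcases hx with rfl | hx
              · exact hsy
              · exact hybot x (Finset.mem_erase.1 hx).2 (Finset.mem_erase.1 hx).1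
            · obtain ⟨h1, h2⟩ := hσ.rej t v hv
              rcases eq_or_ne v u with rfl | hvu
              · refine ⟨?_, Or.inl hcard_u⟩
                intro x hx
                rw [hslots_u, Finset.mem_insert] at hx
                rcases hx with rfl | hx
                · exact hsy
                · exact h1 x (hAudef ▸ (Finset.mem_erase.1 hx).2)
              · rw [hslots_v v hvu]; exact ⟨h1, h2⟩
          · rw [if_neg hty] at hv
            obtain ⟨h1, h2⟩ := hσ.rej t v hv
            rcases eq_or_ne v u with rfl | hvu
            · refine ⟨?_, Or.inl hcard_u⟩
              intro x hx
              rw [hslots_u, Finset.mem_insert] at hx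
              rcases hx with rfl | hx
              · exact _root_.trans hsy (h1 y (hAudef ▸ hyAu))
              · exact h1 x (hAudef ▸ (Finset.mem_erase.1 hx).2)
            · rw [hslots_v v hvu]; exact ⟨h1, h2⟩
        · intro t v hcond
          dsimp only at hcond
          have hty : t ≠ y := fun h => hcond (h ▸ rfl)
          rintro ⟨h1, h2⟩
          dsimp only at h1 h2
          rcases eq_or_ne t s with rfl | hts
          · rw [hA's] at h1
            have hvR : v ∈ σ.R t := key v h1
            have hvu : v ≠ u := fun h => huR (h ▸ hvR)
            obtain ⟨hr1, hr2⟩ := hσ.rej t v hvR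
            rcases h2 with ⟨hlt, hsacc⟩ | ⟨x, hxv, hx⟩
            · rw [ncard_assignedSet, hslots_v v hvu] at hlt
              rcases hr2 with h | h
              · omega
              · exact asymm hsacc h
            · have hxm : x ∈ slots A' v := mem_slots.2 hxv
              rw [hslots_v v hvu] at hxm
              exact asymm hx (hr1 x hxm)
          · have h1' : sPref t (some v) (σ.A t) := by rwa [hA'ne t hts hty] at h1
            have hnb := hσ.noBlock t v
              (by rw [hact]; exact fun h => hts (Option.some_inj.1 h).symm)
            rcases eq_or_ne v u with rfl | hvu
            · have htAu : σ.A t ≠ some v := fun h => irrefl _ (h ▸ h1')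
              have hbig : ∀ x ∈ slots σ.A v, uPref v (some x) (some t) := by
                intro x hx
                have hxt : x ≠ t := fun h => htAu (h ▸ mem_slots.1 hx)
                rcases trichotomous_of (uPref v) (some t) (some x) with h | h | h
                · exact absurd ⟨h1', Or.inr ⟨x, mem_slots.1 hx, h⟩⟩ hnb
                · exact absurd (Option.some_inj.1 h).symm hxt
                · exact h
              rcases h2 with ⟨hlt, _⟩ | ⟨x, hxv, hx⟩
              · rw [ncard_assignedSet, hcard_u] at hlt
                omega
              · rcases eq_or_ne x s with rfl | hxs
                · exact asymm hx (_root_.trans hsy (hbig y (hAudef ▸ hyAu)))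
                · rcases eq_or_ne x y with rfl | hxy
                  · rw [hA'y] at hxv; exact nomatch hxv
                  · have hxold : σ.A x = some v := by rwa [hA'ne x hxs hxy] at hxv
                    exact asymm hx (hbig x (mem_slots.2 hxold))
            · refine hnb ⟨h1', ?_⟩
              rcases h2 with ⟨hlt, hsacc⟩ | ⟨x, hxv, hx⟩
              · rw [ncard_assignedSet, hslots_v v hvu, ← ncard_assignedSet] at hlt
                exact Or.inl ⟨hlt, hsacc⟩
              · have hxm : x ∈ slots A' v := mem_slots.2 hxv
                rw [hslots_v v hvu] at hxm
                exact Or.inr ⟨x, mem_slots.1 hxm, hx⟩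
        · refine inj_comp hu hσ.inj ?_
          intro v
          rcases eq_or_ne v u with rfl | hvu
          · have hsmem : s ∈ assignedSet A' v := hA's
            refine ⟨fun x => if hxy : (x : T) = y then ⟨s, hsmem⟩ else ⟨x.1, by
                have hxv : σ.A (x : T) = some v := x.2
                have hxs : (x : T) ≠ s := fun h => by
                  rw [h, hAs] at hxv; exact nomatch hxv
                show A' (x : T) = some v
                rw [hA'ne _ hxs hxy]; exact hxv⟩, ?_, ?_⟩
            · intro a b hab
              dsimp only at hab
              by_cases hay : (a : T) = y <;> by_cases hby : (b : T) = y
              · exact Subtype.ext (hay.trans hby.symm)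
              · rw [dif_pos hay, dif_neg hby] at hab
                have hval : s = (b : T) := by simpa using congrArg Subtype.val hab
                have hbv : σ.A (b : T) = some v := b.2
                rw [← hval, hAs] at hbv
                exact nomatch hbv
              · rw [dif_neg hay, dif_pos hby] at hab
                have hval : (a : T) = s := by simpa using congrArg Subtype.val hab
                have hav : σ.A (a : T) = some v := a.2
                rw [hval, hAs] at hav
                exact nomatch hav
              · rw [dif_neg hay, dif_neg hby] at hab
                exact Subtype.ext (by simpa using congrArg Subtype.val hab)
            · intro x
              dsimp only
              by_cases hxy : (x : T) = y
              · rw [dif_pos hxy]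
                exact Or.inr (by rw [hxy]; exact hsy)
              · rw [dif_neg hxy]
                exact Or.inl rfl
          · refine ⟨fun x => ⟨x.1, by
                have hxv : σ.A (x : T) = some v := x.2
                have hxs : (x : T) ≠ s := fun h => by
                  rw [h, hAs] at hxv; exact nomatch hxv
                have hxy : (x : T) ≠ y := fun h => by
                  rw [h, hyA] at hxv
                  exact hvu (Option.some_inj.1 hxv).symm
                show A' (x : T) = some v
                rw [hA'ne _ hxs hxy]; exact hxv⟩,
              fun a b h => Subtype.ext (by simpa using congrArg Subtype.val h),
              fun x => Or.inl rfl⟩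
        · have hcards : ∀ t, (if t = y then insert u (σ.R t) else σ.R t).card =
              (if t = y then 1 else 0) + (σ.R t).card := by
            intro t
            by_cases hty : t = y
            · subst hty
              rw [if_pos rfl, if_pos rfl, Finset.card_insert_of_notMem huRy]
              omega
            · rw [if_neg hty, if_neg hty]; omega
          dsimp only
          simp only [hcards, Finset.sum_add_distrib, Finset.sum_ite_eq',
            Finset.mem_univ, if_pos]
          omega
      · -- reject: `u` is full and prefers all its students to `s`
        haveI := hu u
        push_neg at hne
        refine reject_step (fun x hx => ?_) (Or.inl hcard)
        have hxs : x ≠ s := fun h => hsAu (h ▸ hx)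
        rcases trichotomous_of (uPref u) (some x) (some s) with h | h | h
        · exact h
        · exact absurd (Option.some_inj.1 h) hxs
        · exact absurd h (hne x hx)

theorem reach_done (hL : 1 ≤ L)
    (hs : ∀ s, IsStrictTotalOrder (Option U) (sPref s))
    (hu : ∀ u, IsStrictTotalOrder (Option T) (uPref u))
    (σ : MState T U) (hσ : ChainInv L sPref uPref A₀ σ) :
    ∃ σ' : MState T U, ChainInv L sPref uPref A₀ σ' ∧ σ'.act = none := by
  set B := Fintype.card T * Fintype.card U with hB
  have hΦ : ∀ τ : MState T U, (∑ t, (τ.R t).card) ≤ B := by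
    intro τ
    calc ∑ t, (τ.R t).card ≤ ∑ _t : T, Fintype.card U :=
          Finset.sum_le_sum fun t _ => Finset.card_le_univ _
      _ = B := by simp [hB, Finset.sum_const, Finset.card_univ, mul_comm]
  -- strong induction on B + 1 - Φ
  have main : ∀ n (τ : MState T U), ChainInv L sPref uPref A₀ τ →
      B + 1 - (∑ t, (τ.R t).card) ≤ n →
      ∃ σ' : MState T U, ChainInv L sPref uPref A₀ σ' ∧ σ'.act = none := by
    intro n
    induction n with
    | zero =>
      intro τ hτ hle
      have := hΦ τ; omega
    | succ n ih =>
      intro τ hτ hle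
      cases hactτ : τ.act with
      | none => exact ⟨τ, hτ, hactτ⟩
      | some s =>
        obtain ⟨σ', hσ', hcase⟩ := progress hL hs hu τ hτ s hactτ
        rcases hcase with hdone | hsum
        · exact ⟨σ', hσ', hdone⟩
        · exact ih σ' hσ' (by have := hΦ σ'; omega)
  have h1 : ∑ t, (σ.R t).card ≤ B := hΦ σ
  exact main (B + 1) σ hσ (by omega)

end Chain

/-- Adding a student to the market: if `M` is a stable matching of the market
restricted to the students other than `s₀`, then there is a stable matching `M'` of
the full market in which, for every university `u`, there is an injection `ι` from
`M(u)` into `M'(u)` such that `u` weakly prefers `ι t` to `t` for every `t ∈ M(u)`;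
in particular every university is assigned at least as many students in `M'`. -/
theorem exists_stable_matching_with_extra_student
    {T U : Type*} [Fintype T] [Fintype U] (s₀ : T)
    (L : ℕ) (hL : 1 ≤ L)
    (sPref : T → Option U → Option U → Prop) (uPref : U → Option T → Option T → Prop)
    (hs : ∀ s, IsStrictTotalOrder (Option U) (sPref s))
    (hu : ∀ u, IsStrictTotalOrder (Option T) (uPref u))
    (m : {t : T // t ≠ s₀} → Option U)
    (hm : IsStableMatching L (fun s => sPref s.val)
      (fun u a b => uPref u (a.map Subtype.val) (b.map Subtype.val)) m) :
    ∃ m' : T → Option U, IsStableMatching L sPref uPref m' ∧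
      ∀ u : U,
        (∃ ι : assignedSet m u → assignedSet m' u, Function.Injective ι ∧
          ∀ t : assignedSet m u,
            ((ι t : T) = ((t : {t : T // t ≠ s₀}) : T) ∨
              uPref u (some (ι t : T)) (some ((t : {t : T // t ≠ s₀}) : T)))) ∧
        (assignedSet m u).ncard ≤ (assignedSet m' u).ncard := by
  classical
  set A₀ : T → Option U := fun t => if h : t = s₀ then none else m ⟨t, h⟩ with hA₀def
  have hA₀s₀ : A₀ s₀ = none := by simp [hA₀def]
  have hA₀ne : ∀ t (h : t ≠ s₀), A₀ t = m ⟨t, h⟩ := by intro t h; simp [hA₀def, h]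
  have hset : ∀ u, assignedSet A₀ u = Subtype.val '' assignedSet m u := by
    intro u
    ext t
    constructor
    · intro ht
      have ht' : A₀ t = some u := ht
      by_cases h : t = s₀
      · rw [h, hA₀s₀] at ht'; exact nomatch ht'
      · refine ⟨⟨t, h⟩, ?_, rfl⟩
        show m (⟨t, h⟩ : {t : T // t ≠ s₀}) = some u
        rw [← hA₀ne t h]; exact ht'
    · rintro ⟨x, hx, rfl⟩
      show A₀ (x : T) = some u
      rw [hA₀ne _ x.2]; exact hx
  have hncard : ∀ u, (assignedSet A₀ u).ncard = (assignedSet m u).ncard := by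
    intro u; rw [hset u, Set.ncard_image_of_injective _ Subtype.val_injective]
  obtain ⟨hm1, hm2, hm3, hm4⟩ := hm
  have hinv : ChainInv L sPref uPref A₀ ⟨A₀, some s₀, fun _ => ∅⟩ := by
    refine ⟨?_, ?_, ?_, ?_, ?_, ?_, ?_⟩
    · intro u
      dsimp only
      rw [← ncard_assignedSet, hncard u]
      exact hm1 u
    · intro t u htu
      dsimp only at htu
      by_cases h : t = s₀
      · rw [h, hA₀s₀] at htu; exact nomatch htu
      · exact hm2 ⟨t, h⟩ u (by rwa [← hA₀ne t h])
    · intro t u htu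
      dsimp only at htu
      by_cases h : t = s₀
      · rw [h, hA₀s₀] at htu; exact nomatch htu
      · simpa using hm3 ⟨t, h⟩ u (by rwa [← hA₀ne t h])
    · intro t ht
      dsimp only at ht ⊢
      obtain rfl := Option.some_inj.1 ht
      exact hA₀s₀
    · intro t u h
      simp at h
    · intro t u hcond
      dsimp only at hcond
      have hts : t ≠ s₀ := fun h => hcond (h ▸ rfl)
      rintro ⟨h1, h2⟩
      dsimp only at h1 h2
      refine hm4 ⟨t, hts⟩ u ⟨by rwa [hA₀ne t hts] at h1, ?_⟩
      rcases h2 with ⟨hlt, hacc⟩ | ⟨x, hxu, hx⟩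
      · refine Or.inl ⟨?_, by simpa using hacc⟩
        rwa [← hncard u]
      · by_cases hxs : x = s₀
        · rw [hxs, hA₀s₀] at hxu; exact nomatch hxu
        · exact Or.inr ⟨⟨x, hxs⟩, by rwa [← hA₀ne x hxs], by simpa using hx⟩
    · intro u
      exact ⟨id, fun a b h => h, fun t => Or.inl rfl⟩
  obtain ⟨σ', hσ', hdone⟩ := reach_done hL hs hu _ hinv
  refine ⟨σ'.A, ⟨?_, hσ'.sIR, hσ'.uIR,
      fun t u => hσ'.noBlock t u (by rw [hdone]; simp)⟩, ?_⟩
  · intro u; rw [ncard_assignedSet]; exact hσ'.cap u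
  · intro u
    obtain ⟨ι', hinj', hpref'⟩ := hσ'.inj u
    have hmem : ∀ x : assignedSet m u,
        ((x : {t : T // t ≠ s₀}) : T) ∈ assignedSet A₀ u := fun x => by
      show A₀ _ = some u
      rw [hA₀ne _ (x : {t : T // t ≠ s₀}).2]
      exact x.2
    refine ⟨⟨fun x => ι' ⟨((x : {t : T // t ≠ s₀}) : T), hmem x⟩, ?_, ?_⟩, ?_⟩
    · intro a b h
      have hval : ((a : {t : T // t ≠ s₀}) : T) = ((b : {t : T // t ≠ s₀}) : T) :=
        Subtype.mk_eq_mk.1 (hinj' h)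
      exact Subtype.ext (Subtype.ext hval)
    · intro x
      exact hpref' ⟨((x : {t : T // t ≠ s₀}) : T), hmem x⟩
    · rw [← hncard u, ← Nat.card_coe_set_eq, ← Nat.card_coe_set_eq]
      exact Nat.card_le_card_of_injective ι' hinj'
end

section
/- Fix a real number M > 0 and an integer K ≥ 1. The function s ↦ 1 − (1 − M(1 − e^{−s/M})/s)^K is strictly decreasing on (0, ∞), and its values lie in the open interval (0, 1) for every s > 0 (note that M(1 − e^{−s/M})/s ∈ (0,1) for all s > 0). -/
private lemma af_hasDerivAt (M : ℝ) (hM : 0 < M) {s : ℝ} (hs : 0 < s) :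
    HasDerivAt (fun s : ℝ => M * (1 - Real.exp (-s / M)) / s)
      ((Real.exp (-s / M) * s - M * (1 - Real.exp (-s / M))) / s ^ 2) s := by
  have h1 : HasDerivAt (fun s : ℝ => -s / M) (-(1 / M)) s := by
    simpa [neg_div] using ((hasDerivAt_id s).neg.div_const M)
  have h2 : HasDerivAt (fun s : ℝ => M * (1 - Real.exp (-s / M)))
      (Real.exp (-s / M)) s := by
    have := ((h1.exp).const_sub 1).const_mul M
    exact this.congr_deriv (by
      simp only [mul_neg, neg_neg]
      rw [one_div, ← mul_assoc, mul_comm M, mul_assoc, mul_inv_cancel₀ hM.ne', mul_one])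
  have := h2.div (hasDerivAt_id s) hs.ne'
  exact this.congr_deriv (by simp)

private lemma af_mem (M : ℝ) (hM : 0 < M) {s : ℝ} (hs : 0 < s) :
    M * (1 - Real.exp (-s / M)) / s ∈ Set.Ioo (0 : ℝ) 1 := by
  have hexp : Real.exp (-s / M) < 1 := by
    rw [Real.exp_lt_one_iff]
    exact div_neg_of_neg_of_pos (neg_neg_iff_pos.mpr hs) hM
  have hsM : 0 < s / M := div_pos hs hM
  have hep : 0 < Real.exp (s / M) := Real.exp_pos _
  have hen : Real.exp (-s / M) = (Real.exp (s / M))⁻¹ := by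
    rw [neg_div, Real.exp_neg]
  constructor
  · apply div_pos _ hs
    apply mul_pos hM; linarith
  · rw [div_lt_one hs]
    have h' := Real.add_one_lt_exp (neg_ne_zero.mpr hsM.ne')
    rw [show Real.exp (-(s / M)) = Real.exp (-s / M) by rw [neg_div]] at h'
    rw [show -(s / M) + 1 = 1 - s / M by ring] at h'
    have h2 : 1 - Real.exp (-s / M) < s / M := by linarith
    calc M * (1 - Real.exp (-s / M)) < M * (s / M) :=
          mul_lt_mul_of_pos_left h2 hM
      _ = s := by field_simp

private lemma af_anti (M : ℝ) (hM : 0 < M) :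
    StrictAntiOn (fun s : ℝ => M * (1 - Real.exp (-s / M)) / s) (Set.Ioi 0) := by
  apply StrictAntiOn.mono (s := Set.Ioi (0:ℝ))
    (strictAntiOn_of_deriv_neg (convex_Ioi 0) ?_ ?_) le_rfl
  · exact fun x hx => ((af_hasDerivAt M hM hx).continuousAt.continuousWithinAt)
  · intro x hx
    rw [interior_Ioi] at hx
    have hx' : (0:ℝ) < x := hx
    rw [(af_hasDerivAt M hM hx').deriv]
    apply div_neg_of_neg_of_pos _ (by positivity)
    have hxM : 0 < x / M := div_pos hx' hM
    have h := Real.add_one_lt_exp hxM.ne'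
    have hep : 0 < Real.exp (x / M) := Real.exp_pos _
    have hen : Real.exp (-x / M) = (Real.exp (x / M))⁻¹ := by
      rw [neg_div, Real.exp_neg]
    rw [hen, sub_neg]
    have hinv : (Real.exp (x / M))⁻¹ * Real.exp (x / M) = 1 :=
      inv_mul_cancel₀ hep.ne'
    have hx2 : x < M * (Real.exp (x / M) - 1) := by
      have := (div_lt_iff₀ hM).mp (show x / M < Real.exp (x / M) - 1 by linarith)
      nlinarith
    have hkey := mul_lt_mul_of_pos_left hx2 (inv_pos.mpr hep)
    nlinarith [hkey, hinv, inv_pos.mpr hep]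

/-- For `M > 0` and an integer `K ≥ 1`, the function
`s ↦ 1 - (1 - M(1 - e^{-s/M})/s)^K` is strictly decreasing on `(0, ∞)` and takes
values in `(0, 1)` for every `s > 0`; moreover `M(1 - e^{-s/M})/s ∈ (0, 1)` for
every `s > 0`. -/
theorem acceptance_fraction_strictAnti_mem_Ioo
    (M : ℝ) (hM : 0 < M) (K : ℕ) (hK : 1 ≤ K) :
    (∀ s : ℝ, 0 < s → M * (1 - Real.exp (-s / M)) / s ∈ Set.Ioo (0 : ℝ) 1) ∧
    StrictAntiOn (fun s : ℝ => 1 - (1 - M * (1 - Real.exp (-s / M)) / s) ^ K)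
      (Set.Ioi 0) ∧
    ∀ s : ℝ, 0 < s →
      (1 - (1 - M * (1 - Real.exp (-s / M)) / s) ^ K) ∈ Set.Ioo (0 : ℝ) 1 := by
  refine ⟨fun s hs => af_mem M hM hs, ?_, ?_⟩
  · intro a ha b hb hab
    have hfa := af_mem M hM (Set.mem_Ioi.mp ha)
    have hfb := af_mem M hM (Set.mem_Ioi.mp hb)
    have hlt := af_anti M hM ha hb hab
    simp only [Set.mem_Ioo] at hfa hfb
    have h1 : (1 - M * (1 - Real.exp (-a / M)) / a) ^ K
        < (1 - M * (1 - Real.exp (-b / M)) / b) ^ K := by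
      apply pow_lt_pow_left₀ (by simp only at hlt; linarith) (by linarith) (by omega)
    simp only
    linarith
  · intro s hs
    have hf := af_mem M hM hs
    simp only [Set.mem_Ioo] at hf
    have h1 : 0 < (1 - M * (1 - Real.exp (-s / M)) / s) ^ K := by
      apply pow_pos; linarith
    have h2 : (1 - M * (1 - Real.exp (-s / M)) / s) ^ K < 1 :=
      pow_lt_one₀ (by linarith) (by linarith) (by omega)
    exact ⟨by linarith, by linarith⟩
end

section
/- Fix a real number M > 0 and an integer K ≥ 1. There exists a unique real number s > 0 satisfying M(1 − e^{−s/M}) = 1 − (1 − M(1 − e^{−s/M})/s)^K. -/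
/-- Slopes from the origin of `1 - e^{-x}` are strictly decreasing. -/
private lemma key_ineq {x y : ℝ} (hx : 0 < x) (hxy : x < y) :
    x * (1 - Real.exp (-y)) < y * (1 - Real.exp (-x)) := by
  have hy : 0 < y := hx.trans hxy
  have h : Real.exp ((x/y) • (-y) + (1 - x/y) • (0:ℝ)) <
      (x/y) • Real.exp (-y) + (1 - x/y) • Real.exp 0 :=
    strictConvexOn_exp.2 (Set.mem_univ (-y)) (Set.mem_univ (0:ℝ))
      (neg_ne_zero.mpr hy.ne')
      (by positivity) (by rw [sub_pos]; exact (div_lt_one hy).mpr hxy) (by ring)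
  simp only [smul_eq_mul, mul_zero, add_zero, Real.exp_zero, mul_one] at h
  have hxy' : x / y * -y = -x := by field_simp
  rw [hxy'] at h
  have h3 : y * (x / y * Real.exp (-y) + (1 - x / y)) = x * Real.exp (-y) + y - x := by
    field_simp
    ring
  have h4 := mul_lt_mul_of_pos_left h hy
  rw [h3] at h4
  nlinarith [h4]

private lemma g_pos {M s : ℝ} (hM : 0 < M) (hs : 0 < s) :
    0 < M * (1 - Real.exp (-s / M)) := by
  have h : (-s / M : ℝ) < 0 := div_neg_of_neg_of_pos (neg_lt_zero.mpr hs) hM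
  have := Real.exp_lt_one_iff.mpr h
  nlinarith

private lemma g_lt {M s : ℝ} (hM : 0 < M) (hs : 0 < s) :
    M * (1 - Real.exp (-s / M)) < s := by
  have h : (-s / M : ℝ) ≠ 0 := ne_of_lt (div_neg_of_neg_of_pos (neg_lt_zero.mpr hs) hM)
  have h2 := Real.add_one_lt_exp h
  have h3 : -s / M * M = -s := div_mul_cancel₀ _ hM.ne'
  nlinarith [mul_lt_mul_of_pos_right h2 hM]

/-- For `M > 0` and an integer `K ≥ 1`, there is a unique `s > 0` satisfying the
fixed-point equation `M(1 - e^{-s/M}) = 1 - (1 - M(1 - e^{-s/M})/s)^K`. -/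
theorem existsUnique_fixed_point (M : ℝ) (hM : 0 < M) (K : ℕ) (hK : 1 ≤ K) :
    ∃! s : ℝ, 0 < s ∧
      M * (1 - Real.exp (-s / M)) =
        1 - (1 - M * (1 - Real.exp (-s / M)) / s) ^ K := by
  set g : ℝ → ℝ := fun s => M * (1 - Real.exp (-s / M)) with hgdef
  set ψ : ℝ → ℝ := fun s => g s - 1 + (1 - g s / s) ^ K with hψdef
  have hgp : ∀ s : ℝ, 0 < s → 0 < g s := fun s hs => g_pos hM hs
  have hgl : ∀ s : ℝ, 0 < s → g s < s := fun s hs => g_lt hM hs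
  have hbase : ∀ s : ℝ, 0 < s → 0 < 1 - g s / s ∧ 0 < g s / s := by
    intro s hs
    have h1 : g s / s < 1 := (div_lt_one hs).mpr (hgl s hs)
    exact ⟨by linarith, div_pos (hgp s hs) hs⟩
  -- strict monotonicity of ψ on positives
  have hmono : ∀ a b : ℝ, 0 < a → a < b → ψ a < ψ b := by
    intro a b ha hab
    have hb : 0 < b := ha.trans hab
    have h1 : g a < g b := by
      have he : Real.exp (-b / M) < Real.exp (-a / M) := by
        apply Real.exp_lt_exp.mpr
        rw [div_lt_div_iff₀ hM hM]
        nlinarith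
      simp only [hgdef]
      nlinarith
    have h2 : g b / b < g a / a := by
      have hk := key_ineq (x := a / M) (y := b / M)
        (by positivity) ((div_lt_div_iff_of_pos_right hM).mpr hab)
      have e1 : -(a / M) = -a / M := (neg_div M a).symm
      have e2 : -(b / M) = -b / M := (neg_div M b).symm
      rw [e1, e2] at hk
      rw [div_mul_eq_mul_div, div_mul_eq_mul_div, div_lt_div_iff₀ hM hM,
        mul_lt_mul_iff_of_pos_right hM] at hk
      have hk2 := hk
      rw [div_lt_div_iff₀ hb ha]
      simp only [hgdef]
      nlinarith [hk2]
    have h3 : (1 - g a / a) ^ K ≤ (1 - g b / b) ^ K := by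
      apply pow_le_pow_left₀ (le_of_lt (hbase a ha).1)
      linarith
    simp only [hψdef]
    linarith
  -- negative value at 1/2
  have hneg : ψ (1/2) < 0 := by
    have h05 : (0:ℝ) < 1/2 := by norm_num
    have hg05 := hgp _ h05
    have hb05 := hbase _ h05
    have hpow : (1 - g (1/2) / (1/2)) ^ K ≤ 1 - g (1/2) / (1/2) :=
      pow_le_of_le_one (le_of_lt hb05.1) (by linarith [hb05.2]) (by omega)
    have hdiv : g (1/2) / (1/2) = 2 * g (1/2) := by ring
    simp only [hψdef]
    rw [hdiv] at hpow ⊢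
    linarith
  -- positive value at K + 1
  have hKpos : (0:ℝ) < (K:ℝ) + 1 := by positivity
  have hpos : 0 < ψ ((K:ℝ) + 1) := by
    have hgK := hgp _ hKpos
    have hbK := hbase _ hKpos
    set G := g ((K:ℝ) + 1) with hG
    set u := G / ((K:ℝ) + 1) with hu
    have hbern : 1 + (K:ℝ) * (-u) ≤ (1 + (-u)) ^ K :=
      one_add_mul_le_pow (by nlinarith [hbK.1, hbK.2]) K
    simp only [← sub_eq_add_neg, mul_neg] at hbern
    have hq : (K:ℝ) * u < G := by
      rw [hu, mul_div_assoc']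
      rw [div_lt_iff₀ hKpos]
      nlinarith
    simp only [hψdef]
    linarith [hbern, hq]
  -- continuity on the interval
  have hcont : ContinuousOn ψ (Set.Icc (1/2 : ℝ) ((K:ℝ)+1)) := by
    have hgc : Continuous g := by fun_prop
    apply ContinuousOn.add
    · exact (hgc.continuousOn.sub continuousOn_const)
    · apply ContinuousOn.pow
      apply ContinuousOn.sub continuousOn_const
      apply ContinuousOn.div hgc.continuousOn continuousOn_id
      intro x hx
      have : (0:ℝ) < x := lt_of_lt_of_le (by norm_num) hx.1
      exact this.ne'
  have hle : (1/2 : ℝ) ≤ (K:ℝ) + 1 := by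
    have : (1:ℝ) ≤ (K:ℝ) := by exact_mod_cast hK
    linarith
  have hmem : (0:ℝ) ∈ Set.Icc (ψ (1/2)) (ψ ((K:ℝ)+1)) := ⟨le_of_lt hneg, le_of_lt hpos⟩
  obtain ⟨c, hcmem, hc0⟩ := intermediate_value_Icc hle hcont hmem
  have hcpos : 0 < c := lt_of_lt_of_le (by norm_num) hcmem.1
  refine ⟨c, ⟨hcpos, ?_⟩, ?_⟩
  · have h0 : ψ c = 0 := hc0
    simp only [hψdef, hgdef] at h0
    linarith
  · rintro y ⟨hy, hyeq⟩
    have hψy : ψ y = 0 := by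
      simp only [hψdef, hgdef]
      linarith [hyeq]
    rcases lt_trichotomy y c with h | h | h
    · exact absurd (hmono y c hy h) (by rw [hψy, hc0]; exact lt_irrefl 0)
    · exact h
    · exact absurd (hmono c y hcpos h) (by rw [hψy, hc0]; exact lt_irrefl 0)
end

section
/- Fix a real number M > 0. For each integer K ≥ 1 let s(K) denote the unique positive real solution of M(1 − e^{−s/M}) = 1 − (1 − M(1 − e^{−s/M})/s)^K. Then s(K) is strictly increasing in K: s(K+1) > s(K) for every K ≥ 1. -/
lemma expneg_convex : ConvexOn ℝ Set.univ (fun u : ℝ => Real.exp (-u)) := by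
  have h := convexOn_exp.comp_affineMap (AffineMap.mk' (fun u : ℝ => -u)
    (LinearMap.id.smulRight (-1) : ℝ →ₗ[ℝ] ℝ) 0 (by intro p; simp [mul_comm]))
  simp at h
  exact h

/-- slope monotonicity: for 0 < x ≤ y, (1 - e^{-x})/x ≥ (1 - e^{-y})/y -/
lemma slope_mono {x y : ℝ} (hx : 0 < x) (hxy : x ≤ y) :
    (1 - Real.exp (-y)) / y ≤ (1 - Real.exp (-x)) / x := by
  have h := expneg_convex.secant_mono (a := (0:ℝ)) (x := x) (y := y)
    (Set.mem_univ _) (Set.mem_univ _) (Set.mem_univ _) (ne_of_gt hx)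
    (ne_of_gt (lt_of_lt_of_le hx hxy)) hxy
  simp only [neg_zero, Real.exp_zero, sub_zero] at h
  have hy : 0 < y := lt_of_lt_of_le hx hxy
  have := neg_le_neg h
  rw [← neg_div, ← neg_div] at this
  simpa [neg_sub] using this

lemma one_sub_exp_neg_lt {x : ℝ} (hx : 0 < x) : 1 - Real.exp (-x) < x := by
  have := Real.add_one_lt_exp (x := -x) (by linarith)
  linarith

lemma one_sub_exp_neg_pos {x : ℝ} (hx : 0 < x) : 0 < 1 - Real.exp (-x) := by
  have : Real.exp (-x) < 1 := Real.exp_lt_one_iff.mpr (by linarith)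
  linarith

/-- For `M > 0`, the unique positive solution `s(K)` of the fixed-point equation
`M(1 - e^{-s/M}) = 1 - (1 - M(1 - e^{-s/M})/s)^K` is strictly increasing in `K`:
if `s` solves the equation for `K` and `t` solves it for `K + 1`, then `s < t`. -/
theorem fixed_point_strict_mono_in_K (M : ℝ) (hM : 0 < M) (K : ℕ) (hK : 1 ≤ K)
    (s t : ℝ) (hs : 0 < s) (ht : 0 < t)
    (heqs : M * (1 - Real.exp (-s / M)) =
      1 - (1 - M * (1 - Real.exp (-s / M)) / s) ^ K)
    (heqt : M * (1 - Real.exp (-t / M)) =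
      1 - (1 - M * (1 - Real.exp (-t / M)) / t) ^ (K + 1)) :
    s < t := by
  by_contra hts
  push_neg at hts  -- t ≤ s
  set f : ℝ → ℝ := fun u => M * (1 - Real.exp (-u / M)) with hf
  set b : ℝ → ℝ := fun u => 1 - f u / u with hb
  have hsM : 0 < s / M := div_pos hs hM
  have htM : 0 < t / M := div_pos ht hM
  have hrw : ∀ u : ℝ, -u / M = -(u / M) := fun u => by ring
  -- f u positive
  have hfpos : ∀ u : ℝ, 0 < u → 0 < f u := fun u hu => by
    have := one_sub_exp_neg_pos (div_pos hu hM)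
    simp only [hf, hrw u]
    positivity
  -- f u < u
  have hflt : ∀ u : ℝ, 0 < u → f u < u := by
    intro u hu
    have h := one_sub_exp_neg_lt (div_pos hu hM)
    have : M * (1 - Real.exp (-(u / M))) < M * (u / M) :=
      (mul_lt_mul_iff_right₀ hM).mpr h
    rw [mul_div_cancel₀ _ (ne_of_gt hM)] at this
    simpa [hf, hrw u] using this
  -- b bounds
  have hb01 : ∀ u : ℝ, 0 < u → 0 < b u ∧ b u < 1 := by
    intro u hu
    constructor
    · have : f u / u < 1 := (div_lt_one hu).mpr (hflt u hu)
      simp only [hb]; linarith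
    · have : 0 < f u / u := div_pos (hfpos u hu) hu
      simp only [hb]; linarith
  have hdiv : t / M ≤ s / M := by gcongr
  -- f monotone
  have hfmono : f t ≤ f s := by
    have : Real.exp (-s / M) ≤ Real.exp (-t / M) := by
      apply Real.exp_le_exp.mpr
      rw [neg_div, neg_div]
      linarith
    simp only [hf]
    nlinarith
  -- b monotone : b t ≤ b s
  have hbmono : b t ≤ b s := by
    have h := slope_mono (y := s / M) htM hdiv
    -- (1 - exp(-(s/M)))/(s/M) ≤ (1 - exp(-(t/M)))/(t/M)
    have hst : f s / s ≤ f t / t := by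
      have hs' : f s / s = (1 - Real.exp (-(s/M))) / (s/M) := by
        simp only [hf, hrw s]
        rw [div_div_eq_mul_div]
        ring
      have ht' : f t / t = (1 - Real.exp (-(t/M))) / (t/M) := by
        simp only [hf, hrw t]
        rw [div_div_eq_mul_div]
        ring
      rw [hs', ht']; exact h
    simp only [hb]; linarith
  obtain ⟨hbs0, hbs1⟩ := hb01 s hs
  obtain ⟨hbt0, hbt1⟩ := hb01 t ht
  -- b s ^ (K+1) < b s ^ K
  have hpow1 : b s ^ (K + 1) < b s ^ K :=
    pow_lt_pow_right_of_lt_one₀ hbs0 hbs1 (Nat.lt_succ_self K)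
  have hpow2 : b t ^ (K + 1) ≤ b s ^ (K + 1) :=
    pow_le_pow_left₀ (le_of_lt hbt0) hbmono _
  have heqs' : f s = 1 - b s ^ K := heqs
  have heqt' : f t = 1 - b t ^ (K + 1) := heqt
  linarith
end
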